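/- arXiv:0804.0321 — 4 statements merged into one kernel-verified Lean document; each statement's English description precedes it below -/
import Mathlib

section
/- For every t > 0 and every bounded continuous g : [0,∞) → ℝ, the difference (1/N) Σ_{i=1}^N g(w_i^{(N)}) ( χ_{Y_i^{(N)}(t) ≤ y_C^{(N)}(t)} − χ_{Y_i^{(N)}(t) ≤ y_C(t)} ) converges to 0 in probability as N → ∞, where y_C(t) = 1 − ∫_{[0,∞)} e^{−wt} λ(dw). -/
open MeasureTheory ProbabilityTheory Filter Topology Real Set NNReal BoundedContinuousFunction

noncomputable section

/-- The stochastic ranking process of `N` particles on a probability space `Ω`: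
jump rates `w i > 0`, initial ranks `x0` (a permutation of `1,…,N`), jump times
`τ i j` with `τ i 0 = 0`, strictly increasing in `j` (a.s.), independent among
particles, with i.i.d. increments that are exponential of rate `w i`; together
with the ranking process `X`, defined by the explicit formulas of the paper. -/
structure RankingSystem (Ω : Type) [MeasureSpace Ω] (N : ℕ) where
  /-- jump rates -/
  w : Fin N → ℝ≥0
  w_pos : ∀ i, 0 < w i
  /-- initial ranks -/
  x0 : Fin N → ℕ
  /-- the initial ranks form a permutation of `1,…,N` -/
  x0_perm : ∀ k ∈ Finset.Icc 1 N, ∃! i : Fin N, x0 i = k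
  /-- jump times; `τ i j` is the `j`-th jump time of particle `i` -/
  τ : Fin N → ℕ → Ω → ℝ
  τ_meas : ∀ i j, Measurable fun ω => τ i j ω
  τ_zero : ∀ i ω, τ i 0 ω = 0
  τ_mono : ∀ᵐ ω ∂(ℙ : Measure Ω), ∀ i, StrictMono fun j => τ i j ω
  /-- independence of the jump-time sequences of different particles -/
  indep : iIndepFun
    (fun i ω => fun j => τ i j ω) (ℙ : Measure Ω)
  /-- independence of the increments of the jump times of each particle -/
  incr_indep : ∀ i, iIndepFun
    (fun j ω => τ i (j + 1) ω - τ i j ω) (ℙ : Measure Ω)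
  /-- each increment is exponentially distributed with rate `w i` -/
  incr_exp : ∀ i j (t : ℝ), 0 ≤ t →
    (ℙ : Measure Ω) {ω | τ i (j + 1) ω - τ i j ω ≤ t}
      = ENNReal.ofReal (1 - Real.exp (-(w i : ℝ) * t))
  /-- the ranking of particle `i` at time `t` -/
  X : Fin N → ℝ → Ω → ℕ
  /-- before the first jump of `i`:
  `X_i(t) = x_{i,0} + #{i' : x_{i',0} > x_{i,0}, τ_{i',1} ≤ t}` -/
  X_def1 : ∀ ω i (t : ℝ), 0 ≤ t → t < τ i 1 ω →
    X i t ω = x0 i + Set.ncard {i' : Fin N | x0 i < x0 i' ∧ τ i' 1 ω ≤ t}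
  /-- at each jump time the particle goes to the top: `X_i(τ_{i,j}) = 1` -/
  X_def2 : ∀ ω i (j : ℕ), 1 ≤ j → X i (τ i j ω) ω = 1
  /-- between consecutive jumps:
  `X_i(t) = #{i' : ∃ j' ≥ 1, τ_{i,j} < τ_{i',j'} ≤ t}` for `τ_{i,j} < t < τ_{i,j+1}` -/
  X_def3 : ∀ ω i (j : ℕ) (t : ℝ), 1 ≤ j → τ i j ω < t → t < τ i (j + 1) ω →
    X i t ω = Set.ncard
      {i' : Fin N | ∃ j' : ℕ, 1 ≤ j' ∧ τ i j ω < τ i' j' ω ∧ τ i' j' ω ≤ t}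

/-- the scaled position `Y_i^{(N)}(t) = (X_i^{(N)}(t) - 1)/N` -/
def RankingSystem.Y {Ω : Type} [MeasureSpace Ω] {N : ℕ} (R : RankingSystem Ω N)
    (i : Fin N) (t : ℝ) (ω : Ω) : ℝ :=
  ((R.X i t ω : ℝ) - 1) / N

/-- the scaled boundary position `y_C^{(N)}(t) = (1/N) Σ_i χ_{τ_{i,1} ≤ t}` -/
def RankingSystem.yCN {Ω : Type} [MeasureSpace Ω] {N : ℕ} (R : RankingSystem Ω N)
    (t : ℝ) (ω : Ω) : ℝ :=
  (N : ℝ)⁻¹ * ∑ i : Fin N, if R.τ i 1 ω ≤ t then (1 : ℝ) else 0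

/-- the scaled initial position `y_{i,0}^{(N)} = (x_{i,0}^{(N)} - 1)/N` -/
def RankingSystem.y0 {Ω : Type} [MeasureSpace Ω] {N : ℕ} (R : RankingSystem Ω N)
    (i : Fin N) : ℝ :=
  ((R.x0 i : ℝ) - 1) / N

section Aux

variable {Ω : Type} [MeasureSpace Ω] {N : ℕ}

lemma RankingSystem.x0_mem (R : RankingSystem Ω N) (i : Fin N) :
    R.x0 i ∈ Finset.Icc 1 N := by
  classical
  let f : (Finset.Icc 1 N : Finset ℕ) → Fin N := fun k => (R.x0_perm k k.2).choose
  have hf : ∀ k : (Finset.Icc 1 N : Finset ℕ), R.x0 (f k) = (k : ℕ) :=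
    fun k => (R.x0_perm k k.2).choose_spec.1
  have hinj : Function.Injective f := by
    intro k₁ k₂ h
    have : (k₁ : ℕ) = (k₂ : ℕ) := by rw [← hf k₁, ← hf k₂, h]
    exact Subtype.ext this
  have hcard : Fintype.card (Finset.Icc 1 N : Finset ℕ) = Fintype.card (Fin N) := by
    simp [Nat.card_Icc]
  have hsurj : Function.Surjective f :=
    ((Fintype.bijective_iff_injective_and_card f).2 ⟨hinj, hcard⟩).2
  obtain ⟨k, hk⟩ := hsurj i
  rw [← hk, hf k]
  exact k.2

lemma RankingSystem.x0_inj (R : RankingSystem Ω N) :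
    Function.Injective R.x0 := by
  intro i₁ i₂ h
  obtain ⟨i, -, huniq⟩ := R.x0_perm (R.x0 i₁) (R.x0_mem i₁)
  rw [huniq i₁ rfl, huniq i₂ h.symm]

end Aux

section Det

variable {Ω : Type} [MeasureSpace Ω] {N : ℕ}

lemma det_bound (R : RankingSystem Ω N) (t c : ℝ) (ht : 0 ≤ t) (hc : 0 ≤ c)
    (g : ℝ≥0 →ᵇ ℝ) (ω : Ω)
    (hmono : ∀ i, StrictMono fun j => R.τ i j ω)
    (hfin : ∀ i, ∃ j, t < R.τ i j ω) :
    |(N : ℝ)⁻¹ * ∑ i : Fin N, g (R.w i) *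
        ((if R.Y i t ω ≤ R.yCN t ω then (1 : ℝ) else 0)
          - (if R.Y i t ω ≤ c then (1 : ℝ) else 0))|
      ≤ ‖g‖ * (2 * |R.yCN t ω - c| + 1 / N) := by
  classical
  rcases Nat.eq_zero_or_pos N with hN | hNpos
  · subst hN
    simp only [Nat.cast_zero, Finset.univ_eq_empty, Finset.sum_empty, mul_zero, abs_zero]
    positivity
  have hN : (0 : ℝ) < N := by exact_mod_cast hNpos
  -- the set of particles that have jumped by time t
  set J : Finset (Fin N) := Finset.univ.filter (fun i => R.τ i 1 ω ≤ t) with hJdef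
  set K : ℕ := J.card with hKdef
  have hyCN : R.yCN t ω = K / N := by
    rw [RankingSystem.yCN, Finset.sum_boole, ← hJdef]
    rw [div_eq_inv_mul]
  -- the index of the last jump before time t
  have hτ0 : ∀ i, R.τ i 0 ω = 0 := fun i => R.τ_zero i ω
  set F : Fin N → ℕ := fun i => Nat.find (hfin i) with hFdef
  have hF_spec : ∀ i, t < R.τ i (F i) ω := fun i => Nat.find_spec (hfin i)
  have hF_min : ∀ i, ∀ j < F i, ¬ t < R.τ i j ω := fun i j hj => Nat.find_min (hfin i) hj
  have hF_pos : ∀ i, 1 ≤ F i := by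
    intro i
    by_contra h
    have h0 : F i = 0 := by omega
    have hs := hF_spec i
    rw [h0, hτ0 i] at hs
    linarith
  set lst : Fin N → ℕ := fun i => F i - 1 with hlstdef
  have hlst_eq : ∀ i, lst i + 1 = F i := by
    intro i; have := hF_pos i; simp only [hlstdef]; omega
  have hlst_succ : ∀ i, t < R.τ i (lst i + 1) ω := by
    intro i
    rw [hlst_eq i]; exact hF_spec i
  have hlst_le : ∀ i, R.τ i (lst i) ω ≤ t := by
    intro i
    have h := hF_min i (lst i) (by have := hlst_eq i; omega)
    linarith [not_lt.mp h]
  have hτle_iff : ∀ i j, R.τ i j ω ≤ t ↔ j ≤ lst i := by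
    intro i j
    constructor
    · intro h
      by_contra hj
      have : lst i + 1 ≤ j := by omega
      have := (hmono i).monotone this
      have := hlst_succ i
      linarith
    · intro h
      exact le_trans ((hmono i).monotone h) (hlst_le i)
  have hmemJ : ∀ i, i ∈ J ↔ 1 ≤ lst i := by
    intro i
    rw [hJdef, Finset.mem_filter]
    simp only [Finset.mem_univ, true_and]
    exact hτle_iff i 1
  -- jumped particles
  set W : Fin N → Finset (Fin N) := fun i => Finset.univ.filter
    (fun i' => ∃ j', 1 ≤ j' ∧ R.τ i (lst i) ω < R.τ i' j' ω ∧ R.τ i' j' ω ≤ t) with hWdef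
  have hXW : ∀ i ∈ J, R.τ i (lst i) ω < t → R.X i t ω = (W i).card := by
    intro i hi hlt
    have h1 : 1 ≤ lst i := (hmemJ i).mp hi
    have := R.X_def3 ω i (lst i) t h1 hlt (hlst_succ i)
    rw [this, Set.ncard_eq_toFinset_card', Set.toFinset_setOf]
  have hWsub : ∀ i ∈ J, W i ⊆ J.erase i := by
    intro i hi i' hi'
    rw [hWdef, Finset.mem_filter] at hi'
    obtain ⟨-, j', hj'1, hlt, hle⟩ := hi'
    rw [Finset.mem_erase]
    constructor
    · rintro rfl
      have : j' ≤ lst i' := (hτle_iff i' j').mp hle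
      have : R.τ i' j' ω ≤ R.τ i' (lst i') ω := (hmono i').monotone this
      linarith
    · rw [hJdef, Finset.mem_filter]
      exact ⟨Finset.mem_univ _, le_trans ((hmono i').monotone hj'1) hle⟩
  have hXjump_le : ∀ i ∈ J, R.X i t ω ≤ K := by
    intro i hi
    have hKpos : 1 ≤ K := Finset.card_pos.mpr ⟨i, hi⟩
    rcases eq_or_lt_of_le (hlst_le i) with heq | hlt
    · have h1 : 1 ≤ lst i := (hmemJ i).mp hi
      have := R.X_def2 ω i (lst i) h1
      rw [heq] at this
      rw [this]; exact hKpos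
    · rw [hXW i hi hlt]
      calc (W i).card ≤ (J.erase i).card := Finset.card_le_card (hWsub i hi)
        _ ≤ K := by rw [Finset.card_erase_of_mem hi]; omega
  -- key counting bound for jumped particles
  have hS : ∀ m : ℕ, 2 ≤ m → ∀ S : Finset (Fin N),
      S = J.filter (fun i => m ≤ R.X i t ω) → S.Nonempty → S.card + m ≤ K := by
    intro m hm S hSdef hne
    obtain ⟨istar, histarS, hmax⟩ := Finset.exists_max_image S (fun i => R.τ i (lst i) ω) hne
    have hmem := histarS
    rw [hSdef, Finset.mem_filter] at hmem
    obtain ⟨histarJ, histarX⟩ := hmem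
    have hlt : R.τ istar (lst istar) ω < t := by
      rcases eq_or_lt_of_le (hlst_le istar) with heq | hlt
      · exfalso
        have h1 : 1 ≤ lst istar := (hmemJ istar).mp histarJ
        have := R.X_def2 ω istar (lst istar) h1
        rw [heq] at this
        rw [this] at histarX
        omega
      · exact hlt
    have hXeq : R.X istar t ω = (W istar).card := hXW istar histarJ hlt
    have hdisj : Disjoint S (W istar) := by
      rw [Finset.disjoint_left]
      intro i' hi'S hi'W
      rw [hWdef, Finset.mem_filter] at hi'W
      obtain ⟨-, j', hj'1, hlt', hle'⟩ := hi'W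
      have h1 : j' ≤ lst i' := (hτle_iff i' j').mp hle'
      have h2 : R.τ i' j' ω ≤ R.τ i' (lst i') ω := (hmono i').monotone h1
      have h3 : R.τ i' (lst i') ω ≤ R.τ istar (lst istar) ω := hmax i' hi'S
      linarith
    have hsub : S ∪ W istar ⊆ J := by
      intro x hx
      rcases Finset.mem_union.mp hx with hx | hx
      · rw [hSdef, Finset.mem_filter] at hx; exact hx.1
      · exact Finset.mem_of_mem_erase (hWsub istar histarJ hx)
    calc S.card + m ≤ S.card + (W istar).card := by omega
      _ = (S ∪ W istar).card := (Finset.card_union_of_disjoint hdisj).symm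
      _ ≤ K := Finset.card_le_card hsub
  -- non-jumped particles
  set A : Fin N → Finset (Fin N) := fun i => Finset.univ.filter
    (fun i' => R.x0 i < R.x0 i' ∧ R.τ i' 1 ω ≤ t) with hAdef
  have hXA : ∀ i ∉ J, R.X i t ω = R.x0 i + (A i).card := by
    intro i hi
    have hlt : t < R.τ i 1 ω := by
      rw [hJdef, Finset.mem_filter] at hi
      push_neg at hi
      exact hi (Finset.mem_univ i)
    have := R.X_def1 ω i t ht hlt
    rw [this, Set.ncard_eq_toFinset_card', Set.toFinset_setOf]
  have hAeq : ∀ i, A i = J.filter (fun i' => R.x0 i < R.x0 i') := by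
    intro i
    rw [hAdef, hJdef]
    ext i'
    simp only [Finset.mem_filter, Finset.mem_univ, true_and]
    tauto
  have hAcard : ∀ i, (A i).card + (J.filter (fun i' => ¬ R.x0 i < R.x0 i')).card = K := by
    intro i
    rw [hAeq i, hKdef]
    exact Finset.card_filter_add_card_filter_not _
  have hAbar : ∀ i ∉ J, (J.filter (fun i' => ¬ R.x0 i < R.x0 i')).card + 1 ≤ R.x0 i := by
    intro i hi
    have hnotmem : i ∉ J.filter (fun i' => ¬ R.x0 i < R.x0 i') :=
      fun h => hi (Finset.mem_filter.mp h).1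
    have hcard : (insert i (J.filter (fun i' => ¬ R.x0 i < R.x0 i'))).card
        = (J.filter (fun i' => ¬ R.x0 i < R.x0 i')).card + 1 :=
      Finset.card_insert_of_notMem hnotmem
    rw [← hcard]
    have : (insert i (J.filter (fun i' => ¬ R.x0 i < R.x0 i'))).card
        ≤ (Finset.Icc 1 (R.x0 i)).card := by
      apply Finset.card_le_card_of_injOn R.x0
      · intro i' hi'
        rcases Finset.mem_insert.mp hi' with rfl | hi'
        · exact Finset.mem_Icc.mpr ⟨(Finset.mem_Icc.mp (R.x0_mem i')).1, le_rfl⟩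
        · rw [Finset.mem_filter] at hi'
          exact Finset.mem_Icc.mpr ⟨(Finset.mem_Icc.mp (R.x0_mem i')).1, not_lt.mp hi'.2⟩
      · exact fun a _ b _ h => R.x0_inj h
    rwa [Nat.card_Icc, Nat.add_sub_cancel] at this
  have hXnonj_ge : ∀ i ∉ J, K + 1 ≤ R.X i t ω := by
    intro i hi
    rw [hXA i hi]
    have h1 := hAcard i
    have h2 := hAbar i hi
    omega
  have hstrict : ∀ i₁ ∉ J, ∀ i₂ ∉ J, R.x0 i₁ < R.x0 i₂ → R.X i₁ t ω < R.X i₂ t ω := by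
    intro i₁ hi₁ i₂ hi₂ hx
    rw [hXA i₁ hi₁, hXA i₂ hi₂]
    have hsub : A i₂ ⊆ A i₁ := by
      intro i' hi'
      rw [hAdef, Finset.mem_filter] at hi' ⊢
      exact ⟨hi'.1, lt_trans hx hi'.2.1, hi'.2.2⟩
    have hsplit : (A i₁).card = (A i₂).card + (A i₁ \ A i₂).card := by
      have := Finset.card_le_card hsub
      rw [Finset.card_sdiff_of_subset hsub]; omega
    have hD : (A i₁ \ A i₂).card ≤ (Finset.Icc (R.x0 i₁ + 1) (R.x0 i₂ - 1)).card := by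
      apply Finset.card_le_card_of_injOn R.x0
      · intro i' hi'
        rw [Finset.mem_coe, Finset.mem_sdiff, hAdef, Finset.mem_filter, Finset.mem_filter] at hi'
        obtain ⟨⟨-, hgt, hτ⟩, hnot⟩ := hi'
        have hle2 : R.x0 i' ≤ R.x0 i₂ := by
          by_contra h
          exact hnot ⟨Finset.mem_univ _, not_le.mp h, hτ⟩
        have hne : i' ≠ i₂ := by
          rintro rfl
          exact hi₂ (Finset.mem_filter.mpr ⟨Finset.mem_univ _, hτ⟩)
        have hne' : R.x0 i' ≠ R.x0 i₂ := fun h => hne (R.x0_inj h)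
        exact Finset.mem_Icc.mpr ⟨by omega, by omega⟩
      · exact fun a _ b _ h => R.x0_inj h
    rw [Nat.card_Icc] at hD
    omega
  have hXnonj_inj : ∀ i₁ ∉ J, ∀ i₂ ∉ J, i₁ ≠ i₂ → R.X i₁ t ω ≠ R.X i₂ t ω := by
    intro i₁ hi₁ i₂ hi₂ hne
    have hxne : R.x0 i₁ ≠ R.x0 i₂ := fun h => hne (R.x0_inj h)
    rcases lt_or_gt_of_ne hxne with h | h
    · exact Nat.ne_of_lt (hstrict i₁ hi₁ i₂ hi₂ h)
    · exact (Nat.ne_of_lt (hstrict i₂ hi₂ i₁ hi₁ h)).symm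
  -- the set of discrepancy particles
  set B : Finset (Fin N) := Finset.univ.filter
    (fun i => ¬(R.Y i t ω ≤ R.yCN t ω ↔ R.Y i t ω ≤ c)) with hBdef
  have hBmem : ∀ i, i ∈ B ↔ ¬(R.Y i t ω ≤ R.yCN t ω ↔ R.Y i t ω ≤ c) := by
    intro i
    rw [hBdef, Finset.mem_filter]
    simp only [Finset.mem_univ, true_and]
  have habs : ∀ i : Fin N, |g (R.w i) *
      ((if R.Y i t ω ≤ R.yCN t ω then (1 : ℝ) else 0)
        - (if R.Y i t ω ≤ c then (1 : ℝ) else 0))|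
      ≤ (if i ∈ B then ‖g‖ else 0) := by
    intro i
    by_cases hiB : i ∈ B
    · rw [if_pos hiB, abs_mul]
      have h1 : |g (R.w i)| ≤ ‖g‖ := by
        rw [← Real.norm_eq_abs]
        exact g.norm_coe_le_norm _
      have h2 : |(if R.Y i t ω ≤ R.yCN t ω then (1 : ℝ) else 0)
          - (if R.Y i t ω ≤ c then (1 : ℝ) else 0)| ≤ 1 := by
        split_ifs <;> norm_num
      calc |g (R.w i)| * |(if R.Y i t ω ≤ R.yCN t ω then (1 : ℝ) else 0)
            - (if R.Y i t ω ≤ c then (1 : ℝ) else 0)|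
          ≤ ‖g‖ * 1 := mul_le_mul h1 h2 (abs_nonneg _) (norm_nonneg g)
        _ = ‖g‖ := mul_one _
    · rw [if_neg hiB]
      have hiff : R.Y i t ω ≤ R.yCN t ω ↔ R.Y i t ω ≤ c := by
        by_contra h
        exact hiB ((hBmem i).mpr h)
      rw [if_congr hiff rfl rfl]
      simp
  have hsum : |(N : ℝ)⁻¹ * ∑ i : Fin N, g (R.w i) *
      ((if R.Y i t ω ≤ R.yCN t ω then (1 : ℝ) else 0)
        - (if R.Y i t ω ≤ c then (1 : ℝ) else 0))|
      ≤ (N : ℝ)⁻¹ * (B.card * ‖g‖) := by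
    rw [abs_mul, abs_of_pos (by positivity : (0:ℝ) < (N:ℝ)⁻¹)]
    apply mul_le_mul_of_nonneg_left _ (by positivity)
    calc |∑ i : Fin N, g (R.w i) *
        ((if R.Y i t ω ≤ R.yCN t ω then (1 : ℝ) else 0)
          - (if R.Y i t ω ≤ c then (1 : ℝ) else 0))|
        ≤ ∑ i : Fin N, |g (R.w i) *
          ((if R.Y i t ω ≤ R.yCN t ω then (1 : ℝ) else 0)
            - (if R.Y i t ω ≤ c then (1 : ℝ) else 0))| := Finset.abs_sum_le_sum_abs _ _
      _ ≤ ∑ i : Fin N, (if i ∈ B then ‖g‖ else 0) := Finset.sum_le_sum (fun i _ => habs i)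
      _ = ∑ i ∈ B, ‖g‖ := by
          rw [Finset.sum_ite_mem, Finset.univ_inter]
      _ = B.card * ‖g‖ := by rw [Finset.sum_const, nsmul_eq_mul]
  -- counting the discrepancy particles
  set fl : ℕ := Nat.floor (c * N) with hfldef
  have hfl_le : (fl : ℝ) ≤ c * N := Nat.floor_le (by positivity)
  have hfl_lt : c * N < (fl : ℝ) + 1 := Nat.lt_floor_add_one _
  have hBJ : ((B ∩ J).card : ℝ) ≤ |(K : ℝ) - c * N| := by
    rcases (B ∩ J).eq_empty_or_nonempty with he | hne
    · rw [he]
      simp only [Finset.card_empty, Nat.cast_zero]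
      exact abs_nonneg _
    · have hsubS : B ∩ J ⊆ J.filter (fun i => fl + 2 ≤ R.X i t ω) := by
        intro i hi
        obtain ⟨hiB, hiJ⟩ := Finset.mem_inter.mp hi
        have hXle : (R.X i t ω : ℝ) ≤ K := by exact_mod_cast hXjump_le i hiJ
        have hχ1 : R.Y i t ω ≤ R.yCN t ω := by
          rw [RankingSystem.Y, hyCN]
          exact (div_le_div_iff_of_pos_right hN).mpr (by linarith)
        have hχ2 : ¬ R.Y i t ω ≤ c := by
          have := (hBmem i).mp hiB
          tauto
        have hlt : c * N < (R.X i t ω : ℝ) - 1 := by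
          rw [RankingSystem.Y] at hχ2
          have := not_le.mp hχ2
          exact (lt_div_iff₀ hN).mp this
        have h5 : (fl : ℝ) + 1 < (R.X i t ω : ℝ) := by linarith
        have h6 : fl + 1 < R.X i t ω := by exact_mod_cast h5
        have hfl2 : fl + 2 ≤ R.X i t ω := by omega
        exact Finset.mem_filter.mpr ⟨hiJ, hfl2⟩
      obtain ⟨x, hx⟩ := hne
      have hScard := hS (fl + 2) (by omega) _ rfl ⟨x, hsubS hx⟩
      have hcard := Finset.card_le_card hsubS
      have hR : ((B ∩ J).card : ℝ) + (fl : ℝ) + 2 ≤ K := by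
        have : (B ∩ J).card + (fl + 2) ≤ K := le_trans (by omega) hScard
        exact_mod_cast this
      have := le_abs_self ((K : ℝ) - c * N)
      linarith
  have hBnJ : ((B \ J).card : ℝ) ≤ |(K : ℝ) - c * N| + 1 := by
    set M' : ℕ := max (K + 1) (fl + 1) with hM'def
    have hsub2 : B \ J ⊆ Finset.univ.filter
        (fun i => i ∉ J ∧ R.X i t ω ∈ Finset.Icc (K + 1) M') := by
      intro i hi
      obtain ⟨hiB, hiJ⟩ := Finset.mem_sdiff.mp hi
      have hge := hXnonj_ge i hiJ
      refine Finset.mem_filter.mpr ⟨Finset.mem_univ _, hiJ, Finset.mem_Icc.mpr ⟨hge, ?_⟩⟩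
      by_cases hp : R.Y i t ω ≤ R.yCN t ω
      · have : (R.X i t ω : ℝ) - 1 ≤ K := by
          rw [RankingSystem.Y, hyCN] at hp
          exact (div_le_div_iff_of_pos_right hN).mp hp
        have h4 : (R.X i t ω : ℝ) ≤ (K : ℝ) + 1 := by linarith
        have : R.X i t ω ≤ K + 1 := by exact_mod_cast h4
        omega
      · have hq : R.Y i t ω ≤ c := by
          have := (hBmem i).mp hiB
          tauto
        have h1 : (R.X i t ω : ℝ) - 1 ≤ c * N := by
          rw [RankingSystem.Y] at hq
          exact (div_le_iff₀ hN).mp hq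
        have h2 : R.X i t ω - 1 ≤ fl := by
          apply Nat.le_floor
          have : (1:ℕ) ≤ R.X i t ω := by omega
          push_cast [Nat.cast_sub this]
          linarith
        omega
    have hcard2 : (B \ J).card ≤ (Finset.Icc (K + 1) M').card := by
      apply le_trans (Finset.card_le_card hsub2)
      apply Finset.card_le_card_of_injOn (fun i => R.X i t ω)
      · intro i hi
        exact (Finset.mem_filter.mp hi).2.2
      · intro a ha b hb h
        by_contra hne
        exact hXnonj_inj a (Finset.mem_filter.mp ha).2.1 b (Finset.mem_filter.mp hb).2.1 hne h
    rw [Nat.card_Icc] at hcard2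
    rcases le_total (fl + 1) (K + 1) with h | h
    · have : M' = K + 1 := max_eq_left h
      rw [this] at hcard2
      have : (B \ J).card ≤ 1 := by omega
      have h1 : ((B \ J).card : ℝ) ≤ 1 := by exact_mod_cast this
      have := abs_nonneg ((K : ℝ) - c * N)
      linarith
    · have hM' : M' = fl + 1 := max_eq_right h
      rw [hM'] at hcard2
      have hcard3 : (B \ J).card + (K + 1) ≤ fl + 2 := by omega
      have hR : ((B \ J).card : ℝ) + K + 1 ≤ (fl : ℝ) + 2 := by exact_mod_cast hcard3
      have habs : c * N - K ≤ |(K : ℝ) - c * N| := by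
        rw [abs_sub_comm]
        exact le_abs_self _
      linarith
  have hBcard : (B.card : ℝ) ≤ 2 * |(K : ℝ) - c * N| + 1 := by
    have : B.card = (B ∩ J).card + (B \ J).card := (Finset.card_inter_add_card_sdiff B J).symm
    rw [this]
    push_cast
    linarith
  -- conclusion
  have habs_eq : |R.yCN t ω - c| = |(K : ℝ) - c * N| / N := by
    rw [hyCN, show (K : ℝ) / N - c = ((K : ℝ) - c * N) / N by field_simp, abs_div,
      abs_of_pos hN]
  calc |(N : ℝ)⁻¹ * ∑ i : Fin N, g (R.w i) *
      ((if R.Y i t ω ≤ R.yCN t ω then (1 : ℝ) else 0)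
        - (if R.Y i t ω ≤ c then (1 : ℝ) else 0))|
      ≤ (N : ℝ)⁻¹ * (B.card * ‖g‖) := hsum
    _ ≤ (N : ℝ)⁻¹ * ((2 * |(K : ℝ) - c * N| + 1) * ‖g‖) := by
        apply mul_le_mul_of_nonneg_left _ (by positivity)
        exact mul_le_mul_of_nonneg_right hBcard (norm_nonneg g)
    _ = ‖g‖ * (2 * |R.yCN t ω - c| + 1 / N) := by
        rw [habs_eq]
        ring

end Det

section Prob

variable {Ω : Type} [MeasureSpace Ω] {N : ℕ}

lemma good_event (R : RankingSystem Ω N) [IsProbabilityMeasure (ℙ : Measure Ω)]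
    (t : ℝ) (ht : 0 ≤ t) :
    (ℙ : Measure Ω) {ω | ¬((∀ i, StrictMono fun j => R.τ i j ω) ∧
      ∀ i, ∃ j, t < R.τ i j ω)} = 0 := by
  have hmono0 : (ℙ : Measure Ω) {ω | ¬ ∀ i, StrictMono fun j => R.τ i j ω} = 0 := by
    have := R.τ_mono
    rwa [MeasureTheory.ae_iff] at this
  have hbad : ∀ i : Fin N,
      (ℙ : Measure Ω) {ω | (StrictMono fun j => R.τ i j ω) ∧ ∀ j, R.τ i j ω ≤ t} = 0 := by
    intro i
    set q : ENNReal := ENNReal.ofReal (1 - Real.exp (-(R.w i : ℝ) * t)) with hq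
    have hq1 : q < 1 := by
      rw [hq]
      apply ENNReal.ofReal_lt_one.mpr
      have : 0 < Real.exp (-(R.w i : ℝ) * t) := Real.exp_pos _
      linarith
    have hsub : ∀ n : ℕ, {ω | (StrictMono fun j => R.τ i j ω) ∧ ∀ j, R.τ i j ω ≤ t}
        ⊆ ⋂ k ∈ Finset.range n, {ω | R.τ i (k + 1) ω - R.τ i k ω ≤ t} := by
      intro n ω hω
      simp only [Set.mem_iInter, Set.mem_setOf_eq]
      intro k _
      obtain ⟨hm, hall⟩ := hω
      have h0 : R.τ i 0 ω = 0 := R.τ_zero i ω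
      have hk0 : (0 : ℝ) ≤ R.τ i k ω := by
        have := hm.monotone (Nat.zero_le k)
        simpa [h0] using this
      linarith [hall (k + 1)]
    have hprod : ∀ n : ℕ,
        (ℙ : Measure Ω) (⋂ k ∈ Finset.range n, {ω | R.τ i (k + 1) ω - R.τ i k ω ≤ t})
          = q ^ n := by
      intro n
      have hmi := (R.incr_indep i).meas_biInter (m := fun _ => inferInstance) (S := Finset.range n)
        (s := fun k => {ω | R.τ i (k + 1) ω - R.τ i k ω ≤ t})
        (fun k _ => ⟨Set.Iic t, measurableSet_Iic, rfl⟩)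
      rw [hmi]
      have : ∀ k : ℕ, (ℙ : Measure Ω) {ω | R.τ i (k + 1) ω - R.τ i k ω ≤ t} = q :=
        fun k => R.incr_exp i k t ht
      rw [Finset.prod_congr rfl (fun k _ => this k), Finset.prod_const, Finset.card_range]
    have hle : ∀ n : ℕ, (ℙ : Measure Ω)
        {ω | (StrictMono fun j => R.τ i j ω) ∧ ∀ j, R.τ i j ω ≤ t} ≤ q ^ n :=
      fun n => (measure_mono (hsub n)).trans_eq (hprod n)
    have := ge_of_tendsto' (ENNReal.tendsto_pow_atTop_nhds_zero_of_lt_one hq1) hle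
    exact le_antisymm this zero_le
  have hsub : {ω : Ω | ¬((∀ i, StrictMono fun j => R.τ i j ω) ∧ ∀ i, ∃ j, t < R.τ i j ω)}
      ⊆ {ω | ¬ ∀ i, StrictMono fun j => R.τ i j ω} ∪
        ⋃ i : Fin N, {ω | (StrictMono fun j => R.τ i j ω) ∧ ∀ j, R.τ i j ω ≤ t} := by
    intro ω hω
    rw [Set.mem_setOf_eq] at hω
    by_cases hP : ∀ i, StrictMono fun j => R.τ i j ω
    · right
      have hQ : ¬ ∀ i, ∃ j, t < R.τ i j ω := fun h => hω ⟨hP, h⟩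
      push_neg at hQ
      obtain ⟨i, hi⟩ := hQ
      exact Set.mem_iUnion.mpr ⟨i, hP i, hi⟩
    · exact Or.inl hP
  refine le_antisymm ?_ zero_le
  calc (ℙ : Measure Ω) {ω | ¬((∀ i, StrictMono fun j => R.τ i j ω) ∧ ∀ i, ∃ j, t < R.τ i j ω)}
      ≤ (ℙ : Measure Ω) ({ω | ¬ ∀ i, StrictMono fun j => R.τ i j ω} ∪
        ⋃ i : Fin N, {ω | (StrictMono fun j => R.τ i j ω) ∧ ∀ j, R.τ i j ω ≤ t}) :=
        measure_mono hsub
    _ ≤ (ℙ : Measure Ω) {ω | ¬ ∀ i, StrictMono fun j => R.τ i j ω} +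
        (ℙ : Measure Ω) (⋃ i : Fin N, {ω | (StrictMono fun j => R.τ i j ω) ∧
          ∀ j, R.τ i j ω ≤ t}) := measure_union_le _ _
    _ ≤ 0 + ∑' i : Fin N, (ℙ : Measure Ω) {ω | (StrictMono fun j => R.τ i j ω) ∧
          ∀ j, R.τ i j ω ≤ t} := by
        rw [hmono0]
        exact add_le_add le_rfl (measure_iUnion_le _)
    _ = 0 := by
        rw [zero_add]
        rw [tsum_congr hbad]
        exact tsum_zero

lemma cheb (R : RankingSystem Ω N) [IsProbabilityMeasure (ℙ : Measure Ω)]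
    (t : ℝ) (ht : 0 ≤ t) (hNpos : 0 < N) {δ : ℝ} (hδ : 0 < δ) :
    (ℙ : Measure Ω) {ω | δ ≤ |R.yCN t ω -
        (1 - (N : ℝ)⁻¹ * ∑ i : Fin N, Real.exp (-(R.w i : ℝ) * t))|}
      ≤ ENNReal.ofReal ((N : ℝ)⁻¹ / δ ^ 2) := by
  classical
  have hN : (0 : ℝ) < N := by exact_mod_cast hNpos
  set ξ : Fin N → Ω → ℝ := fun i ω => if R.τ i 1 ω ≤ t then 1 else 0 with hξdef
  have hmeasset : ∀ i, MeasurableSet {ω | R.τ i 1 ω ≤ t} :=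
    fun i => measurableSet_le (R.τ_meas i 1) measurable_const
  have hmeas : ∀ i, Measurable (ξ i) :=
    fun i => Measurable.ite (hmeasset i) measurable_const measurable_const
  have hbdd : ∀ i, ∀ ω, ‖ξ i ω‖ ≤ 1 := by
    intro i ω
    rw [hξdef]
    simp only [Real.norm_eq_abs]
    split_ifs <;> norm_num
  have hL2 : ∀ i, MemLp (ξ i) 2 (ℙ : Measure Ω) :=
    fun i => MemLp.of_bound (hmeas i).aestronglyMeasurable 1
      (Filter.Eventually.of_forall (hbdd i))
  have hint : ∀ i, Integrable (ξ i) (ℙ : Measure Ω) :=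
    fun i => (hL2 i).integrable one_le_two
  have hmean : ∀ i, (∫ ω, ξ i ω) = 1 - Real.exp (-(R.w i : ℝ) * t) := by
    intro i
    have hset : {ω | R.τ i 1 ω ≤ t} = {ω | R.τ i (0 + 1) ω - R.τ i 0 ω ≤ t} := by
      ext ω
      simp [R.τ_zero i ω]
    have hP : (ℙ : Measure Ω) {ω | R.τ i 1 ω ≤ t}
        = ENNReal.ofReal (1 - Real.exp (-(R.w i : ℝ) * t)) := by
      rw [hset]
      exact R.incr_exp i 0 t ht
    have hξind : ξ i = Set.indicator {ω | R.τ i 1 ω ≤ t} (fun _ => (1 : ℝ)) := by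
      funext ω
      rw [Set.indicator_apply]
      rfl
    rw [hξind, integral_indicator_const (1 : ℝ) (hmeasset i), measureReal_def, hP, smul_eq_mul, mul_one,
      ENNReal.toReal_ofReal]
    have : Real.exp (-(R.w i : ℝ) * t) ≤ 1 := by
      apply Real.exp_le_one_iff.mpr
      have : (0 : ℝ) ≤ (R.w i : ℝ) := (R.w i).coe_nonneg
      nlinarith
    linarith
  have hvar : ∀ i, Var[ξ i] ≤ 1 := by
    intro i
    refine le_trans (variance_le_expectation_sq (hmeas i).aestronglyMeasurable) ?_
    have h1 : (∫ ω, (ξ i ^ 2) ω) ≤ ∫ _ω : Ω, (1 : ℝ) := by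
      apply integral_mono ((hL2 i).integrable_sq) (integrable_const 1)
      intro ω
      simp only [Pi.pow_apply, hξdef]
      split_ifs <;> norm_num
    simpa using h1
  have hindep : iIndepFun ξ
      (ℙ : Measure Ω) := by
    have := R.indep.comp (fun _ (s : ℕ → ℝ) => if s 1 ≤ t then (1 : ℝ) else 0)
      (fun _ => Measurable.ite (measurableSet_le (measurable_pi_apply 1) measurable_const)
        measurable_const measurable_const)
    exact this
  have hvarsum : Var[∑ i : Fin N, ξ i] = ∑ i : Fin N, Var[ξ i] :=
    IndepFun.variance_sum (fun i _ => hL2 i)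
      (fun i _ j _ hij => hindep.indepFun hij)
  have hfun : R.yCN t = (N : ℝ)⁻¹ • ∑ i : Fin N, ξ i := by
    funext ω
    simp only [RankingSystem.yCN, Pi.smul_apply, Finset.sum_apply, smul_eq_mul, hξdef]
  have hL2S : MemLp (R.yCN t) 2 (ℙ : Measure Ω) := by
    rw [hfun]
    exact (memLp_finset_sum' _ (fun i _ => hL2 i)).const_smul _
  have hvarS : Var[R.yCN t] ≤ (N : ℝ)⁻¹ := by
    rw [hfun, variance_smul, hvarsum]
    have hsumle : ∑ i : Fin N, Var[ξ i] ≤ (N : ℝ) := by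
      calc ∑ i : Fin N, Var[ξ i] ≤ ∑ _i : Fin N, (1 : ℝ) :=
            Finset.sum_le_sum (fun i _ => hvar i)
        _ = N := by simp
    calc (N : ℝ)⁻¹ ^ 2 * ∑ i : Fin N, Var[ξ i] ≤ (N : ℝ)⁻¹ ^ 2 * N :=
          mul_le_mul_of_nonneg_left hsumle (by positivity)
      _ = (N : ℝ)⁻¹ := by
          field_simp
  have hES : (∫ ω, R.yCN t ω) = 1 - (N : ℝ)⁻¹ * ∑ i : Fin N, Real.exp (-(R.w i : ℝ) * t) := by
    rw [hfun]
    simp only [Pi.smul_apply, Finset.sum_apply, smul_eq_mul]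
    rw [MeasureTheory.integral_const_mul, integral_finset_sum _ (fun i _ => hint i)]
    rw [Finset.sum_congr rfl (fun i _ => hmean i), Finset.sum_sub_distrib]
    simp only [Finset.sum_const, Finset.card_univ, Fintype.card_fin, nsmul_eq_mul, mul_one]
    field_simp
    exact congrArg _ (Finset.sum_congr rfl (fun x _ => by rw [mul_comm]))
  have hcheb := meas_ge_le_variance_div_sq (μ := (ℙ : Measure Ω)) hL2S hδ
  have hEeq : (ℙ : Measure Ω)[R.yCN t] = (∫ ω, R.yCN t ω) := rfl
  rw [hEeq, hES] at hcheb
  refine le_trans hcheb (ENNReal.ofReal_le_ofReal ?_)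
  gcongr

end Prob

/-- `(1/N) Σ g(w_i)(χ_{Y_i(t) ≤ y_C^{(N)}(t)} - χ_{Y_i(t) ≤ y_C(t)})` converges
to `0` in probability, where `y_C(t) = 1 - ∫ e^{-wt} λ(dw)`. -/
theorem stmt8
    (Ω : Type) [MeasureSpace Ω] [IsProbabilityMeasure (ℙ : Measure Ω)]
    (R : (N : ℕ) → RankingSystem Ω N)
    (lam : Measure ℝ≥0) [IsProbabilityMeasure lam]
    (hweak : ∀ g : ℝ≥0 →ᵇ ℝ,
      Tendsto (fun N : ℕ => (N : ℝ)⁻¹ * ∑ i : Fin N, g ((R N).w i)) atTop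
        (𝓝 (∫ x, g x ∂lam)))
    (t : ℝ) (ht : 0 < t) (g : ℝ≥0 →ᵇ ℝ) :
    ∀ ε > (0 : ℝ), Tendsto
      (fun N : ℕ => (ℙ : Measure Ω)
        {ω | ε ≤ |(N : ℝ)⁻¹ * ∑ i : Fin N, g ((R N).w i) *
              ((if (R N).Y i t ω ≤ (R N).yCN t ω then (1 : ℝ) else 0)
                - (if (R N).Y i t ω ≤ 1 - ∫ x, rexp (-(x : ℝ) * t) ∂lam
                    then (1 : ℝ) else 0))|})
      atTop (𝓝 0) := by
  intro ε hε
  set c : ℝ := 1 - ∫ x, rexp (-(x : ℝ) * t) ∂lam with hcdef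
  set g₀ : ℝ≥0 →ᵇ ℝ := BoundedContinuousFunction.ofNormedAddCommGroup
    (fun x : ℝ≥0 => rexp (-(x : ℝ) * t)) (by continuity) 1
    (fun x => by
      rw [Real.norm_eq_abs, abs_of_pos (Real.exp_pos _)]
      apply Real.exp_le_one_iff.mpr
      nlinarith [x.coe_nonneg]) with hg₀def
  have hc0 : 0 ≤ c := by
    rw [hcdef]
    have hint : Integrable (fun x : ℝ≥0 => rexp (-(x : ℝ) * t)) lam := g₀.integrable lam
    have hle : (∫ x, rexp (-(x : ℝ) * t) ∂lam) ≤ ∫ _x : ℝ≥0, (1 : ℝ) ∂lam := by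
      apply integral_mono hint (integrable_const 1)
      intro x
      apply Real.exp_le_one_iff.mpr
      nlinarith [x.coe_nonneg]
    rw [integral_const] at hle
    simp only [measure_univ, probReal_univ, ENNReal.toReal_one, one_smul, smul_eq_mul, mul_one] at hle
    linarith
  set M : ℝ := ‖g‖ + 1 with hMdef
  have hM : 0 < M := by positivity
  have hgM : ‖g‖ ≤ M := by rw [hMdef]; linarith
  set δ : ℝ := ε / (4 * M) with hδdef
  have hδ : 0 < δ := by positivity
  have hmean : Tendsto (fun N : ℕ => 1 - (N : ℝ)⁻¹ *
      ∑ i : Fin N, Real.exp (-((R N).w i : ℝ) * t)) atTop (𝓝 c) := by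
    rw [hcdef]
    exact Tendsto.const_sub _ (hweak g₀)
  have hev1 : ∀ᶠ N : ℕ in atTop, |(1 - (N : ℝ)⁻¹ *
      ∑ i : Fin N, Real.exp (-((R N).w i : ℝ) * t)) - c| < δ / 2 := by
    have h := Metric.tendsto_nhds.mp hmean (δ / 2) (by positivity)
    filter_upwards [h] with n hn
    rwa [Real.dist_eq] at hn
  have hev2 : ∀ᶠ N : ℕ in atTop, M * (1 / (N : ℝ)) < ε / 2 := by
    have h0 : Tendsto (fun N : ℕ => M * (1 / (N : ℝ))) atTop (𝓝 (M * 0)) :=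
      tendsto_const_nhds.mul tendsto_one_div_atTop_nhds_zero_nat
    rw [mul_zero] at h0
    exact h0.eventually_lt_const (by positivity)
  have hev3 : ∀ᶠ N : ℕ in atTop, 1 ≤ N := eventually_ge_atTop 1
  refine tendsto_of_tendsto_of_tendsto_of_le_of_le'
    (g := fun _ : ℕ => (0 : ENNReal))
    (h := fun N : ℕ => ENNReal.ofReal ((N : ℝ)⁻¹ / (δ / 2) ^ 2))
    tendsto_const_nhds ?_ (Filter.Eventually.of_forall fun N => zero_le) ?_
  · have hreal : Tendsto (fun N : ℕ => (N : ℝ)⁻¹ / (δ / 2) ^ 2) atTop (𝓝 0) := by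
      have h1 : Tendsto (fun N : ℕ => (N : ℝ)⁻¹) atTop (𝓝 0) :=
        tendsto_inv_atTop_zero.comp tendsto_natCast_atTop_atTop
      simpa using h1.div_const ((δ / 2) ^ 2)
    have h2 := ENNReal.tendsto_ofReal hreal
    simpa using h2
  · filter_upwards [hev1, hev2, hev3] with n h1 h2 h3
    have hn : (0 : ℝ) < n := by exact_mod_cast h3
    have hsubset : {ω | ε ≤ |(n : ℝ)⁻¹ * ∑ i : Fin n, g ((R n).w i) *
          ((if (R n).Y i t ω ≤ (R n).yCN t ω then (1 : ℝ) else 0)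
            - (if (R n).Y i t ω ≤ c then (1 : ℝ) else 0))|}
        ⊆ {ω | ¬((∀ i, StrictMono fun j => (R n).τ i j ω) ∧
              ∀ i, ∃ j, t < (R n).τ i j ω)}
          ∪ {ω | δ / 2 ≤ |(R n).yCN t ω -
              (1 - (n : ℝ)⁻¹ * ∑ i : Fin n, Real.exp (-((R n).w i : ℝ) * t))|} := by
      intro ω hω
      rw [Set.mem_setOf_eq] at hω
      by_cases hgood : (∀ i, StrictMono fun j => (R n).τ i j ω) ∧
          ∀ i, ∃ j, t < (R n).τ i j ω
      · right
        rw [Set.mem_setOf_eq]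
        obtain ⟨hP, hQ⟩ := hgood
        have hbd := det_bound (R n) t c ht.le hc0 g ω hP hQ
        set a : ℝ := |(R n).yCN t ω - c| with hadef
        have ha0 : 0 ≤ a := abs_nonneg _
        have h4 : ‖g‖ * (2 * a + 1 / (n : ℝ)) ≤ M * (2 * a) + M * (1 / (n : ℝ)) := by
          have h1n : (0 : ℝ) ≤ 1 / (n : ℝ) := by positivity
          nlinarith [norm_nonneg g]
        have h5 : ε / 2 ≤ M * (2 * a) := by linarith
        have h6 : δ ≤ a := by
          rw [hδdef, div_le_iff₀ (by positivity : (0 : ℝ) < 4 * M)]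
          nlinarith [h5]
        have h7 : a ≤ |(R n).yCN t ω -
            (1 - (n : ℝ)⁻¹ * ∑ i : Fin n, Real.exp (-((R n).w i : ℝ) * t))| +
            |(1 - (n : ℝ)⁻¹ * ∑ i : Fin n, Real.exp (-((R n).w i : ℝ) * t)) - c| :=
          abs_sub_le _ _ _
        linarith
      · exact Or.inl hgood
    calc (ℙ : Measure Ω) {ω | ε ≤ |(n : ℝ)⁻¹ * ∑ i : Fin n, g ((R n).w i) *
          ((if (R n).Y i t ω ≤ (R n).yCN t ω then (1 : ℝ) else 0)
            - (if (R n).Y i t ω ≤ c then (1 : ℝ) else 0))|}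
        ≤ (ℙ : Measure Ω) ({ω | ¬((∀ i, StrictMono fun j => (R n).τ i j ω) ∧
              ∀ i, ∃ j, t < (R n).τ i j ω)}
          ∪ {ω | δ / 2 ≤ |(R n).yCN t ω -
              (1 - (n : ℝ)⁻¹ * ∑ i : Fin n, Real.exp (-((R n).w i : ℝ) * t))|}) :=
          measure_mono hsubset
      _ ≤ (ℙ : Measure Ω) {ω | ¬((∀ i, StrictMono fun j => (R n).τ i j ω) ∧
              ∀ i, ∃ j, t < (R n).τ i j ω)}
          + (ℙ : Measure Ω) {ω | δ / 2 ≤ |(R n).yCN t ω -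
              (1 - (n : ℝ)⁻¹ * ∑ i : Fin n, Real.exp (-((R n).w i : ℝ) * t))|} :=
          measure_union_le _ _
      _ ≤ 0 + ENNReal.ofReal ((n : ℝ)⁻¹ / (δ / 2) ^ 2) :=
          add_le_add (le_of_eq (good_event (R n) t ht.le))
            (cheb (R n) t ht.le h3 (by positivity))
      _ = ENNReal.ofReal ((n : ℝ)⁻¹ / (δ / 2) ^ 2) := zero_add _
end
end

section
/- Define, for y ∈ [0,1) and t ≥ 0, the random variable y_C^{(N)}(y,t) = y + (1/N) Σ_{i=1}^N χ_{τ_i^{(N)} ≤ t} χ_{y_{i,0}^{(N)} ≥ y} and the deterministic function y_C(y,t) = 1 − ∫_y^1 ∫_{[0,∞)} e^{−wt} μ_{z,0}(dw) dz. Then for every y ∈ [0,1) and t ≥ 0, y_C^{(N)}(y,t) converges to y_C(y,t) in probability as N → ∞. -/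
open MeasureTheory ProbabilityTheory Filter Topology Real Set NNReal BoundedContinuousFunction

noncomputable section

lemma aux_perm {N : ℕ} (x0 : Fin N → ℕ)
    (hx0 : ∀ k ∈ Finset.Icc 1 N, ∃! i : Fin N, x0 i = k) :
    Function.Injective x0 ∧ ∀ i, x0 i ∈ Finset.Icc 1 N := by
  classical
  set f : (Finset.Icc 1 N : Finset ℕ) → Fin N := fun k => (hx0 k k.2).choose with hf
  have hfx : ∀ k : (Finset.Icc 1 N : Finset ℕ), x0 (f k) = k :=
    fun k => (hx0 k k.2).choose_spec.1
  have hfinj : Function.Injective f := by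
    intro k₁ k₂ h
    apply Subtype.ext
    rw [← hfx k₁, ← hfx k₂, h]
  have hcard : Fintype.card (Finset.Icc 1 N : Finset ℕ) = Fintype.card (Fin N) := by
    simp [Nat.card_Icc]
  have hfsurj : Function.Surjective f :=
    ((Fintype.bijective_iff_injective_and_card f).2 ⟨hfinj, hcard⟩).2
  have hmem : ∀ i, x0 i ∈ Finset.Icc 1 N := by
    intro i
    obtain ⟨k, hk⟩ := hfsurj i
    rw [← hk, hfx k]; exact k.2
  refine ⟨?_, hmem⟩
  intro i j hij
  obtain ⟨ki, hki⟩ := hfsurj i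
  obtain ⟨kj, hkj⟩ := hfsurj j
  rw [← hki, ← hkj]
  congr 1
  apply Subtype.ext
  rw [← hfx ki, ← hfx kj, hki, hkj, hij]

def expBCF (t : ℝ) (ht : 0 ≤ t) : ℝ≥0 →ᵇ ℝ :=
  BoundedContinuousFunction.ofNormedAddCommGroup (fun x : ℝ≥0 => rexp (-(x : ℝ) * t))
    (by continuity) 1
    (by
      intro x
      rw [Real.norm_eq_abs, abs_of_pos (Real.exp_pos _)]
      apply Real.exp_le_one_iff.2
      have : (0:ℝ) ≤ (x : ℝ) * t := mul_nonneg x.2 ht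
      linarith)

lemma expBCF_apply (t : ℝ) (ht : 0 ≤ t) (x : ℝ≥0) :
    expBCF t ht x = rexp (-(x : ℝ) * t) := rfl

lemma aux_det
    (w : (N : ℕ) → Fin N → ℝ≥0)
    (x0 : (N : ℕ) → Fin N → ℕ)
    (hx0inj : ∀ N, Function.Injective (x0 N))
    (hx0mem : ∀ N i, x0 N i ∈ Finset.Icc 1 N)
    (y0 : (N : ℕ) → Fin N → ℝ)
    (hy0 : ∀ N i, y0 N i = ((x0 N i : ℝ) - 1) / N)
    (μ0 : ℝ → Measure ℝ≥0) (hμ0 : ∀ z, IsProbabilityMeasure (μ0 z))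
    (g : ℝ≥0 →ᵇ ℝ)
    (hgmeas : AEMeasurable (fun z => ∫ x, g x ∂(μ0 z)) volume)
    (hg : Tendsto (fun N : ℕ => ⨆ y : Ico (0 : ℝ) 1,
        |(N : ℝ)⁻¹ * (∑ i : Fin N, g (w N i) * (if y0 N i ≤ (y : ℝ) then (1 : ℝ) else 0))
          - ∫ z in (0 : ℝ)..(y : ℝ), ∫ x, g x ∂(μ0 z)|) atTop (𝓝 0))
    (y : ℝ) (hy : y ∈ Ico (0 : ℝ) 1) :
    Tendsto (fun N : ℕ => (N : ℝ)⁻¹ * ∑ i : Fin N, g (w N i) * (if y ≤ y0 N i then (1:ℝ) else 0))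
      atTop (𝓝 (∫ z in y..1, ∫ x, g x ∂(μ0 z))) := by
  classical
  set F : ℝ → ℝ := fun z => ∫ x, g x ∂(μ0 z) with hF
  have hFb : ∀ z, ‖F z‖ ≤ ‖g‖ := by
    intro z
    have := hμ0 z
    calc ‖F z‖ ≤ ‖g‖ * ((μ0 z) Set.univ).toReal :=
          norm_integral_le_of_norm_le_const (ae_of_all _ fun x => g.norm_coe_le_norm x)
      _ = ‖g‖ := by simp
  have hFii : ∀ a b : ℝ, IntervalIntegrable F volume a b := by
    intro a b
    constructor <;>
    · refine Integrable.mono' (g := fun _ => ‖g‖)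
        (integrableOn_const measure_Ioc_lt_top.ne enorm_ne_top)
        hgmeas.aestronglyMeasurable.restrict (ae_of_all _ hFb)
  set εs : ℕ → ℝ := fun N => ⨆ y : Ico (0 : ℝ) 1,
        |(N : ℝ)⁻¹ * (∑ i : Fin N, g (w N i) * (if y0 N i ≤ (y : ℝ) then (1 : ℝ) else 0))
          - ∫ z in (0 : ℝ)..(y : ℝ), F z| with hεs
  set A : ℕ → ℝ := fun N =>
    (N : ℝ)⁻¹ * ∑ i : Fin N, g (w N i) * (if y ≤ y0 N i then (1:ℝ) else 0) with hA
  set B : ℕ → ℝ → ℝ := fun N y' =>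
    (N : ℝ)⁻¹ * ∑ i : Fin N, g (w N i) * (if y0 N i ≤ y' then (1:ℝ) else 0) with hB
  set T : ℝ := ∫ z in y..1, F z with hT
  -- bound on B
  have hBb : ∀ N y', |B N y'| ≤ ‖g‖ := by
    intro N y'
    have h1 : |∑ i : Fin N, g (w N i) * (if y0 N i ≤ y' then (1:ℝ) else 0)|
        ≤ (N : ℝ) * ‖g‖ := by
      calc |∑ i : Fin N, g (w N i) * (if y0 N i ≤ y' then (1:ℝ) else 0)|
          ≤ ∑ i : Fin N, |g (w N i) * (if y0 N i ≤ y' then (1:ℝ) else 0)| :=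
            Finset.abs_sum_le_sum_abs _ _
        _ ≤ ∑ _i : Fin N, ‖g‖ := by
            refine Finset.sum_le_sum fun i _ => ?_
            rw [abs_mul]
            have h2 : |g (w N i)| ≤ ‖g‖ := by
              rw [← Real.norm_eq_abs]; exact g.norm_coe_le_norm _
            have h3 : |(if y0 N i ≤ y' then (1:ℝ) else 0)| ≤ 1 := by
              split <;> simp
            calc |g (w N i)| * |(if y0 N i ≤ y' then (1:ℝ) else 0)|
                ≤ ‖g‖ * 1 := by
                  apply mul_le_mul h2 h3 (abs_nonneg _) (norm_nonneg _)
              _ = ‖g‖ := mul_one _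
        _ = (N : ℝ) * ‖g‖ := by simp [Finset.sum_const]
    rw [hB]
    simp only [abs_mul, abs_inv, Nat.abs_cast]
    rcases Nat.eq_zero_or_pos N with h | h
    · simp [h]
    · have hN : (0:ℝ) < N := by exact_mod_cast h
      calc ((N:ℝ))⁻¹ * |∑ i : Fin N, g (w N i) * (if y0 N i ≤ y' then (1:ℝ) else 0)|
          ≤ (N:ℝ)⁻¹ * ((N : ℝ) * ‖g‖) := by
            apply mul_le_mul_of_nonneg_left h1 (by positivity)
        _ = ‖g‖ := by field_simp
  -- the sup dominates each term
  have hsup : ∀ N : ℕ, ∀ y' ∈ Ico (0:ℝ) 1,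
      |B N y' - ∫ z in (0:ℝ)..y', F z| ≤ εs N := by
    intro N y' hy'
    have hbdd : BddAbove (Set.range fun y' : Ico (0:ℝ) 1 =>
        |B N (y' : ℝ) - ∫ z in (0:ℝ)..(y' : ℝ), F z|) := by
      refine ⟨‖g‖ + ‖g‖, ?_⟩
      rintro v ⟨y'', rfl⟩
      have h1 : |∫ z in (0:ℝ)..(y'' : ℝ), F z| ≤ ‖g‖ := by
        have := intervalIntegral.norm_integral_le_of_norm_le_const
          (C := ‖g‖) (f := F) (a := 0) (b := (y'' : ℝ)) (fun x _ => hFb x)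
        rw [Real.norm_eq_abs] at this
        have h2 : |(y'' : ℝ) - 0| ≤ 1 := by
          obtain ⟨h3, h4⟩ := y''.2
          rw [sub_zero, abs_of_nonneg h3]; linarith
        nlinarith [norm_nonneg g, abs_nonneg (∫ z in (0:ℝ)..(y'' : ℝ), F z)]
      calc |B N (y'' : ℝ) - ∫ z in (0:ℝ)..(y'' : ℝ), F z|
          ≤ |B N (y'' : ℝ)| + |∫ z in (0:ℝ)..(y'' : ℝ), F z| := abs_sub _ _
        _ ≤ ‖g‖ + ‖g‖ := add_le_add (hBb N _) h1
    exact le_ciSup hbdd (⟨y', hy'⟩ : Ico (0:ℝ) 1)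
  -- key estimate
  have key : ∀ N : ℕ, 1 ≤ N → |A N - T| ≤ εs N + εs N + (‖g‖ / N + ‖g‖ / N) := by
    intro N hN1
    have hN : (0:ℝ) < N := by exact_mod_cast hN1
    set yN : ℝ := 1 - (N:ℝ)⁻¹ with hyNdef
    have hyN : yN ∈ Ico (0:ℝ) 1 := by
      constructor
      · show (0:ℝ) ≤ 1 - (N:ℝ)⁻¹
        have : (N:ℝ)⁻¹ ≤ 1 := by
          rw [inv_le_one_iff₀]; right; exact_mod_cast hN1
        linarith
      · show (1:ℝ) - (N:ℝ)⁻¹ < 1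
        have : (0:ℝ) < (N:ℝ)⁻¹ := by positivity
        linarith
    have hall : ∀ i : Fin N, y0 N i ≤ yN := by
      intro i
      have hx := Finset.mem_Icc.1 (hx0mem N i)
      have hxN : ((x0 N i : ℝ)) ≤ N := by exact_mod_cast hx.2
      rw [hy0, hyNdef, div_le_iff₀ hN]
      have h1 : (1 - (N:ℝ)⁻¹) * N = N - 1 := by field_simp
      rw [h1]; linarith
    -- pointwise identity
    have hpt : ∀ i : Fin N, g (w N i) * (if y ≤ y0 N i then (1:ℝ) else 0)
        = g (w N i) * (if y0 N i ≤ yN then (1:ℝ) else 0)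
          - g (w N i) * (if y0 N i ≤ y then (1:ℝ) else 0)
          + g (w N i) * (if y0 N i = y then (1:ℝ) else 0) := by
      intro i
      rw [if_pos (hall i)]
      rcases lt_trichotomy (y0 N i) y with h | h | h
      · rw [if_neg (by linarith), if_pos h.le, if_neg h.ne]
        ring
      · rw [if_pos h.ge, if_pos h.le, if_pos h]
        ring
      · rw [if_pos h.le, if_neg (by linarith), if_neg h.ne']
        ring
    set D : ℝ := (N : ℝ)⁻¹ * ∑ i : Fin N, g (w N i) * (if y0 N i = y then (1:ℝ) else 0) with hD
    have hsum_id : A N = B N yN - B N y + D := by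
      simp only [hA, hB, hD]
      rw [← mul_sub, ← mul_add, ← Finset.sum_sub_distrib, ← Finset.sum_add_distrib]
      congr 1
      exact Finset.sum_congr rfl fun i _ => hpt i
    -- bound on D
    have hDb : |D| ≤ ‖g‖ / N := by
      have hfil : ∑ i : Fin N, g (w N i) * (if y0 N i = y then (1:ℝ) else 0)
          = ∑ i ∈ Finset.filter (fun i => y0 N i = y) Finset.univ, g (w N i) := by
        rw [Finset.sum_filter]
        refine Finset.sum_congr rfl fun i _ => ?_
        split <;> simp
      have hcard : (Finset.filter (fun i => y0 N i = y) Finset.univ).card ≤ 1 := by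
        refine Finset.card_le_one.2 fun i hi j hj => ?_
        have hi' : y0 N i = y := (Finset.mem_filter.1 hi).2
        have hj' : y0 N j = y := (Finset.mem_filter.1 hj).2
        apply hx0inj N
        have : ((x0 N i : ℝ) - 1) / N = ((x0 N j : ℝ) - 1) / N := by
          rw [← hy0, ← hy0, hi', hj']
        field_simp at this
        exact_mod_cast (by linarith : ((x0 N i : ℝ)) = x0 N j)
      have habs : |∑ i ∈ Finset.filter (fun i => y0 N i = y) Finset.univ, g (w N i)| ≤ ‖g‖ := by
        calc |∑ i ∈ Finset.filter (fun i => y0 N i = y) Finset.univ, g (w N i)|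
            ≤ ∑ i ∈ Finset.filter (fun i => y0 N i = y) Finset.univ, |g (w N i)| :=
              Finset.abs_sum_le_sum_abs _ _
          _ ≤ ∑ _i ∈ Finset.filter (fun i => y0 N i = y) Finset.univ, ‖g‖ := by
              refine Finset.sum_le_sum fun i _ => ?_
              rw [← Real.norm_eq_abs]; exact g.norm_coe_le_norm _
          _ = (Finset.filter (fun i => y0 N i = y) Finset.univ).card * ‖g‖ := by
              simp [Finset.sum_const, mul_comm]
          _ ≤ 1 * ‖g‖ := by
              apply mul_le_mul_of_nonneg_right _ (norm_nonneg _)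
              exact_mod_cast hcard
          _ = ‖g‖ := one_mul _
      rw [hD, hfil, abs_mul, abs_inv, Nat.abs_cast, div_eq_inv_mul]
      exact mul_le_mul_of_nonneg_left habs (by positivity)
    -- adjacent intervals
    have hadj1 : (∫ z in (0:ℝ)..y, F z) + (∫ z in y..1, F z) = ∫ z in (0:ℝ)..1, F z :=
      intervalIntegral.integral_add_adjacent_intervals (hFii 0 y) (hFii y 1)
    have hadj2 : (∫ z in (0:ℝ)..yN, F z) + (∫ z in yN..1, F z) = ∫ z in (0:ℝ)..1, F z :=
      intervalIntegral.integral_add_adjacent_intervals (hFii 0 yN) (hFii yN 1)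
    have htail : |∫ z in yN..1, F z| ≤ ‖g‖ / N := by
      have h1 := intervalIntegral.norm_integral_le_of_norm_le_const
        (C := ‖g‖) (f := F) (a := yN) (b := 1) (fun x _ => hFb x)
      rw [Real.norm_eq_abs] at h1
      have h2 : |1 - yN| = (N:ℝ)⁻¹ := by
        rw [hyNdef, show (1:ℝ) - (1 - (N:ℝ)⁻¹) = (N:ℝ)⁻¹ from by ring,
          abs_of_nonneg (by positivity : (0:ℝ) ≤ (N:ℝ)⁻¹)]
      rw [h2] at h1
      rw [div_eq_mul_inv]
      exact h1
    have h1 := hsup N yN hyN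
    have h2 := hsup N y hy
    have heq : A N - T = (B N yN - ∫ z in (0:ℝ)..yN, F z) - (∫ z in yN..1, F z)
        - (B N y - ∫ z in (0:ℝ)..y, F z) + D := by
      rw [hsum_id, hT]
      have hT' : (∫ z in y..1, F z) = (∫ z in (0:ℝ)..1, F z) - ∫ z in (0:ℝ)..y, F z := by
        linarith
      have h3 : (∫ z in yN..1, F z) = (∫ z in (0:ℝ)..1, F z) - ∫ z in (0:ℝ)..yN, F z := by
        linarith
      rw [hT', h3]
      ring
    rw [heq]
    calc |(B N yN - ∫ z in (0:ℝ)..yN, F z) - (∫ z in yN..1, F z)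
        - (B N y - ∫ z in (0:ℝ)..y, F z) + D|
        ≤ |(B N yN - ∫ z in (0:ℝ)..yN, F z) - (∫ z in yN..1, F z)
          - (B N y - ∫ z in (0:ℝ)..y, F z)| + |D| := abs_add_le _ _
      _ ≤ (|(B N yN - ∫ z in (0:ℝ)..yN, F z) - (∫ z in yN..1, F z)|
          + |B N y - ∫ z in (0:ℝ)..y, F z|) + |D| := by
            gcongr
            exact abs_sub _ _
      _ ≤ ((|B N yN - ∫ z in (0:ℝ)..yN, F z| + |∫ z in yN..1, F z|)
          + |B N y - ∫ z in (0:ℝ)..y, F z|) + |D| := by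
            gcongr
            exact abs_sub _ _
      _ ≤ ((εs N + ‖g‖ / N) + εs N) + ‖g‖ / N := by
            gcongr
      _ = εs N + εs N + (‖g‖ / N + ‖g‖ / N) := by ring
  have hden : Tendsto (fun N : ℕ => εs N + εs N + (‖g‖ / N + ‖g‖ / N)) atTop (𝓝 0) := by
    have h1 : Tendsto (fun N : ℕ => ‖g‖ / N) atTop (𝓝 0) :=
      tendsto_const_div_atTop_nhds_zero_nat _
    have := (hg.add hg).add (h1.add h1)
    simpa using this
  have hsq : Tendsto (fun N => A N - T) atTop (𝓝 0) := by
    apply squeeze_zero_norm' _ hden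
    filter_upwards [eventually_ge_atTop 1] with N hN
    exact key N hN
  have := hsq.add_const T
  simpa using this

lemma aux_cheb
    (Ω : Type) [MeasureSpace Ω] [IsProbabilityMeasure (ℙ : Measure Ω)]
    {N : ℕ} (hN1 : 1 ≤ N)
    (wN : Fin N → ℝ≥0) (hw : ∀ i, 0 < wN i)
    (τN : Fin N → Ω → ℝ)
    (hτmeas : ∀ i, Measurable (τN i))
    (hτindep : iIndepFun τN ℙ)
    (hτdist : ∀ i (t : ℝ), 0 ≤ t →
      (ℙ : Measure Ω) {ω | τN i ω ≤ t} = ENNReal.ofReal (1 - rexp (-(wN i : ℝ) * t)))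
    (c : Fin N → ℝ) (hc : ∀ i, c i = 1 ∨ c i = 0)
    (t : ℝ) (ht : 0 ≤ t) (δ : ℝ) (hδ : 0 < δ) :
    (ℙ : Measure Ω) {ω | δ ≤ |(N : ℝ)⁻¹ * (∑ i : Fin N,
        (if τN i ω ≤ t then (1:ℝ) else 0) * c i)
        - (N : ℝ)⁻¹ * ∑ i : Fin N, (1 - rexp (-(wN i : ℝ) * t)) * c i|}
      ≤ ENNReal.ofReal ((N : ℝ)⁻¹ / δ ^ 2) := by
  classical
  have hN : (0:ℝ) < N := by exact_mod_cast hN1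
  set X : Fin N → Ω → ℝ := fun i ω => (if τN i ω ≤ t then (1:ℝ) else 0) * c i with hX
  have hXeq : ∀ i, X i = (τN i ⁻¹' Iic t).indicator (fun _ => c i) := by
    intro i
    funext ω
    simp only [hX, Set.indicator, Set.mem_preimage, Set.mem_Iic]
    split <;> simp
  have hsmeas : ∀ i, MeasurableSet (τN i ⁻¹' Iic t) := fun i => (hτmeas i) measurableSet_Iic
  have hXmeas : ∀ i, Measurable (X i) := by
    intro i
    rw [hXeq i]
    exact measurable_const.indicator (hsmeas i)
  have hXb : ∀ i ω, ‖X i ω‖ ≤ 1 := by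
    intro i ω
    rw [hX, Real.norm_eq_abs, abs_mul]
    rcases hc i with h | h <;> split <;> simp [h]
  have hXmem : ∀ i, MemLp (X i) 2 ℙ := fun i =>
    (memLp_top_of_bound (hXmeas i).aestronglyMeasurable 1
      (ae_of_all _ (hXb i))).mono_exponent le_top
  have hXint : ∀ i, Integrable (X i) ℙ := fun i => (hXmem i).integrable one_le_two
  have hexnn : ∀ i, 0 ≤ 1 - rexp (-(wN i : ℝ) * t) := by
    intro i
    have h1 : rexp (-(wN i : ℝ) * t) ≤ 1 := by
      apply Real.exp_le_one_iff.2
      have : (0:ℝ) ≤ (wN i : ℝ) * t := mul_nonneg (wN i).2 ht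
      linarith
    linarith
  have hEX : ∀ i, ∫ ω, X i ω ∂ℙ = (1 - rexp (-(wN i : ℝ) * t)) * c i := by
    intro i
    rw [hXeq i, integral_indicator_const _ (hsmeas i)]
    have : (ℙ : Measure Ω) (τN i ⁻¹' Iic t) = ENNReal.ofReal (1 - rexp (-(wN i : ℝ) * t)) :=
      hτdist i t ht
    rw [measureReal_def, this, smul_eq_mul, ENNReal.toReal_ofReal (hexnn i)]
  set S : Ω → ℝ := fun ω => (N : ℝ)⁻¹ * ∑ i : Fin N, X i ω with hS
  have hSsum : S = fun ω => (N:ℝ)⁻¹ * (∑ i : Fin N, X i) ω := by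
    funext ω; rw [hS]; simp [Finset.sum_apply]
  have hSmem : MemLp S 2 ℙ := by
    rw [hSsum]
    exact (memLp_finsetSum' _ (fun i _ => hXmem i)).const_mul _
  have hES : ∫ ω, S ω ∂ℙ = (N : ℝ)⁻¹ * ∑ i : Fin N, (1 - rexp (-(wN i : ℝ) * t)) * c i := by
    rw [hS]
    rw [integral_const_mul, integral_finset_sum _ (fun i _ => hXint i)]
    congr 1
    exact Finset.sum_congr rfl fun i _ => hEX i
  -- variance bound
  have hvarX : ∀ i, variance (X i) ℙ ≤ 1 := by
    intro i
    refine le_trans (variance_le_expectation_sq (hXmeas i).aestronglyMeasurable) ?_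
    have h1 : ∀ ω, (X i ^ 2) ω ≤ 1 := by
      intro ω
      have := hXb i ω
      rw [Real.norm_eq_abs] at this
      calc (X i ^ 2) ω = X i ω ^ 2 := by simp [Pi.pow_apply]
        _ ≤ 1 := (sq_le_one_iff_abs_le_one _).2 this
    calc ∫ ω, (X i ^ 2) ω ∂ℙ ≤ ∫ _ω, (1:ℝ) ∂ℙ :=
          integral_mono (hXmem i).integrable_sq (integrable_const 1) h1
      _ = 1 := by simp
  have hpair : Set.Pairwise ↑(Finset.univ : Finset (Fin N))
      (fun i j => IndepFun (X i) (X j) ℙ) := by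
    intro i _ j _ hij
    have h1 : IndepFun (τN i) (τN j) ℙ := hτindep.indepFun hij
    have hφ : ∀ k : Fin N, Measurable (fun r : ℝ => (if r ≤ t then (1:ℝ) else 0) * c k) := by
      intro k
      apply Measurable.mul_const
      exact Measurable.ite measurableSet_Iic measurable_const measurable_const
    exact h1.comp (hφ i) (hφ j)
  have hvarsum : variance (∑ i : Fin N, X i) ℙ ≤ (N : ℝ) := by
    rw [IndepFun.variance_sum (fun i _ => hXmem i) hpair]
    calc ∑ i : Fin N, variance (X i) ℙ ≤ ∑ _i : Fin N, (1:ℝ) :=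
          Finset.sum_le_sum fun i _ => hvarX i
      _ = (N : ℝ) := by simp
  have hvarS : variance S ℙ ≤ (N : ℝ)⁻¹ := by
    have h1 : variance S ℙ = ((N:ℝ)⁻¹) ^ 2 * variance (∑ i : Fin N, X i) ℙ := by
      rw [hSsum]
      exact variance_const_mul _ _ _
    rw [h1]
    calc ((N:ℝ)⁻¹) ^ 2 * variance (∑ i : Fin N, X i) ℙ ≤ ((N:ℝ)⁻¹) ^ 2 * N := by
          apply mul_le_mul_of_nonneg_left hvarsum (by positivity)
      _ = (N:ℝ)⁻¹ := by field_simp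
  -- Chebyshev
  have hcheb := meas_ge_le_variance_div_sq (μ := (ℙ : Measure Ω)) hSmem hδ
  have hfinal : (ℙ : Measure Ω) {ω | δ ≤ |S ω - ∫ ω', S ω' ∂ℙ|}
      ≤ ENNReal.ofReal ((N : ℝ)⁻¹ / δ ^ 2) := by
    refine le_trans hcheb (ENNReal.ofReal_le_ofReal ?_)
    gcongr
  rw [hES] at hfinal
  exact hfinal

/-- `y_C^{(N)}(y,t) = y + (1/N) Σ χ_{τ_i ≤ t} χ_{y_{i,0} ≥ y}` converges in
probability to `y_C(y,t) = 1 - ∫_y^1 ∫ e^{-wt} μ_{z,0}(dw) dz`. -/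
theorem stmt11
    (Ω : Type) [MeasureSpace Ω] [IsProbabilityMeasure (ℙ : Measure Ω)]
    (w : (N : ℕ) → Fin N → ℝ≥0) (hw : ∀ N i, 0 < w N i)
    (τ : (N : ℕ) → Fin N → Ω → ℝ)
    (hτmeas : ∀ N i, Measurable (τ N i))
    (hτindep : ∀ N, iIndepFun (τ N) ℙ)
    (hτdist : ∀ N i (t : ℝ), 0 ≤ t →
      (ℙ : Measure Ω) {ω | τ N i ω ≤ t} = ENNReal.ofReal (1 - rexp (-(w N i : ℝ) * t)))
    (x0 : (N : ℕ) → Fin N → ℕ)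
    (hx0 : ∀ N, ∀ k ∈ Finset.Icc 1 N, ∃! i : Fin N, x0 N i = k)
    (y0 : (N : ℕ) → Fin N → ℝ)
    (hy0 : ∀ N i, y0 N i = ((x0 N i : ℝ) - 1) / N)
    (μ0 : ℝ → Measure ℝ≥0) (hμ0 : ∀ z, IsProbabilityMeasure (μ0 z))
    (hμ0meas : ∀ g : ℝ≥0 →ᵇ ℝ, AEMeasurable (fun z => ∫ x, g x ∂(μ0 z)) volume)
    (hinit : ∀ g : ℝ≥0 →ᵇ ℝ,
      Tendsto (fun N : ℕ => ⨆ y : Ico (0 : ℝ) 1,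
        |(N : ℝ)⁻¹ * (∑ i : Fin N, g (w N i) * (if y0 N i ≤ (y : ℝ) then (1 : ℝ) else 0))
          - ∫ z in (0 : ℝ)..(y : ℝ), ∫ x, g x ∂(μ0 z)|) atTop (𝓝 0))
    (y : ℝ) (hy : y ∈ Ico (0 : ℝ) 1) (t : ℝ) (ht : 0 ≤ t) :
    ∀ ε > (0 : ℝ), Tendsto
      (fun N : ℕ => (ℙ : Measure Ω)
        {ω | ε ≤ |(y + (N : ℝ)⁻¹ * ∑ i : Fin N,
              (if τ N i ω ≤ t then (1 : ℝ) else 0) * (if y ≤ y0 N i then (1 : ℝ) else 0))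
            - (1 - ∫ z in y..1, ∫ x, rexp (-(x : ℝ) * t) ∂(μ0 z))|})
      atTop (𝓝 0) := by
  classical
  intro ε hε
  have hinj : ∀ N, Function.Injective (x0 N) := fun N => (aux_perm (x0 N) (hx0 N)).1
  have hmem : ∀ N i, x0 N i ∈ Finset.Icc 1 N := fun N => (aux_perm (x0 N) (hx0 N)).2
  set I : ℝ := ∫ z in y..1, ∫ x, rexp (-(x:ℝ) * t) ∂(μ0 z) with hI
  set L : ℝ := 1 - y - I with hL
  -- limit of means, part 1 : constant function 1
  have hA1 : Tendsto (fun N : ℕ =>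
      (N:ℝ)⁻¹ * ∑ i : Fin N, (if y ≤ y0 N i then (1:ℝ) else 0)) atTop (𝓝 (1 - y)) := by
    have h := aux_det w x0 hinj hmem y0 hy0 μ0 hμ0
      (BoundedContinuousFunction.const ℝ≥0 (1:ℝ)) (hμ0meas _) (hinit _) y hy
    have hint1 : ∀ z : ℝ, (∫ x : ℝ≥0, (1:ℝ) ∂(μ0 z)) = 1 := by
      intro z
      have := hμ0 z
      simp
    simp only [BoundedContinuousFunction.const_apply, one_mul, hint1] at h
    have h2 : (∫ z in y..1, (1:ℝ)) = 1 - y := by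
      simp
    rwa [h2] at h
  -- limit of means, part 2 : exp function
  have hAe : Tendsto (fun N : ℕ =>
      (N:ℝ)⁻¹ * ∑ i : Fin N, rexp (-(w N i : ℝ) * t) * (if y ≤ y0 N i then (1:ℝ) else 0))
      atTop (𝓝 I) := by
    have h := aux_det w x0 hinj hmem y0 hy0 μ0 hμ0
      (expBCF t ht) (hμ0meas _) (hinit _) y hy
    simpa only [expBCF_apply, hI] using h
  -- limit of means
  set m : ℕ → ℝ := fun N =>
    (N:ℝ)⁻¹ * ∑ i : Fin N, (1 - rexp (-(w N i : ℝ) * t)) * (if y ≤ y0 N i then (1:ℝ) else 0)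
    with hm
  have hmean : Tendsto m atTop (𝓝 L) := by
    have h := hA1.sub hAe
    have heq : (fun N : ℕ =>
        ((N:ℝ)⁻¹ * ∑ i : Fin N, (if y ≤ y0 N i then (1:ℝ) else 0))
        - (N:ℝ)⁻¹ * ∑ i : Fin N, rexp (-(w N i : ℝ) * t) * (if y ≤ y0 N i then (1:ℝ) else 0))
        = m := by
      funext N
      rw [hm, ← mul_sub, ← Finset.sum_sub_distrib]
      congr 1
      refine Finset.sum_congr rfl fun i _ => ?_
      ring
    rw [heq] at h
    rwa [hL, show (1 : ℝ) - y - I = (1 - y) - I from by ring]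
  have hev1 : ∀ᶠ N in atTop, |m N - L| < ε/2 := by
    have h := hmean.eventually (Metric.ball_mem_nhds L (by positivity : (0:ℝ) < ε/2))
    filter_upwards [h] with N hN
    rw [Real.dist_eq] at hN
    exact hN
  have hbound : ∀ᶠ N : ℕ in atTop,
      (ℙ : Measure Ω) {ω | ε ≤ |(y + (N : ℝ)⁻¹ * ∑ i : Fin N,
            (if τ N i ω ≤ t then (1 : ℝ) else 0) * (if y ≤ y0 N i then (1 : ℝ) else 0))
          - (1 - I)|} ≤ ENNReal.ofReal ((N : ℝ)⁻¹ / (ε/2) ^ 2) := by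
    filter_upwards [eventually_ge_atTop 1, hev1] with N hN1 hmc
    have hsub : {ω | ε ≤ |(y + (N : ℝ)⁻¹ * ∑ i : Fin N,
            (if τ N i ω ≤ t then (1 : ℝ) else 0) * (if y ≤ y0 N i then (1 : ℝ) else 0))
          - (1 - I)|}
        ⊆ {ω | ε/2 ≤ |(N : ℝ)⁻¹ * (∑ i : Fin N,
            (if τ N i ω ≤ t then (1:ℝ) else 0) * (if y ≤ y0 N i then (1:ℝ) else 0))
            - (N : ℝ)⁻¹ * ∑ i : Fin N, (1 - rexp (-(w N i : ℝ) * t))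
              * (if y ≤ y0 N i then (1:ℝ) else 0)|} := by
      intro ω hω
      simp only [Set.mem_setOf_eq] at hω ⊢
      set SN : ℝ := (N : ℝ)⁻¹ * ∑ i : Fin N,
        (if τ N i ω ≤ t then (1:ℝ) else 0) * (if y ≤ y0 N i then (1:ℝ) else 0) with hSN
      have htri : |(y + SN) - (1 - I)| ≤ |SN - m N| + |m N - L| := by
        have heq2 : (y + SN) - (1 - I) = (SN - m N) + (m N - L) := by rw [hL]; ring
        rw [heq2]
        exact abs_add_le _ _
      have h3 : ε/2 ≤ |SN - m N| := by linarith
      rw [hm] at h3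
      exact h3
    refine le_trans (measure_mono hsub) ?_
    exact aux_cheb Ω hN1 (w N) (hw N) (τ N) (hτmeas N) (hτindep N) (hτdist N)
      (fun i => if y ≤ y0 N i then (1:ℝ) else 0)
      (fun i => by by_cases h : y ≤ y0 N i <;> simp [h]) t ht (ε/2) (by positivity)
  have hup : Tendsto (fun N : ℕ => ENNReal.ofReal ((N : ℝ)⁻¹ / (ε/2) ^ 2)) atTop (𝓝 0) := by
    have h0 : Tendsto (fun N : ℕ => (N:ℝ)⁻¹ / (ε/2) ^ 2) atTop (𝓝 0) := by
      have h1 : Tendsto (fun N : ℕ => ((N:ℝ))⁻¹) atTop (𝓝 0) :=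
        tendsto_inv_atTop_zero.comp tendsto_natCast_atTop_atTop
      simpa using h1.div_const ((ε/2) ^ 2)
    have := ENNReal.tendsto_ofReal h0
    simpa using this
  exact tendsto_of_tendsto_of_tendsto_of_le_of_le' tendsto_const_nhds hup
    (Eventually.of_forall fun N => zero_le) hbound
end
end

section
/- For every t ≥ 0, every y ∈ [y_C(0,t), 1) and every bounded continuous g : [0,∞) → ℝ, the change-of-variables identity ∫_{ŷ(y,t)}^1 ∫_{[0,∞)} g(w) e^{−wt} μ_{u,0}(dw) du = ∫_y^1 ( ∫_{[0,∞)} g(w) e^{−wt} μ_{ŷ(z,t),0}(dw) / ∫_{[0,∞)} e^{−wt} μ_{ŷ(z,t),0}(dw) ) dz holds. -/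
open MeasureTheory Filter Topology Real Set NNReal BoundedContinuousFunction

noncomputable section

/-- change-of-variables identity for the inverse `ŷ(·,t)` of `y ↦ y_C(y,t)`:
`∫_{ŷ(y,t)}^1 ∫ g(w) e^{-wt} μ_{u,0}(dw) du
  = ∫_y^1 (∫ g(w) e^{-wt} μ_{ŷ(z,t),0}(dw)) / (∫ e^{-wt} μ_{ŷ(z,t),0}(dw)) dz`. -/
theorem stmt14
    (μ0 : ℝ → Measure ℝ≥0) [∀ z, IsProbabilityMeasure (μ0 z)]
    (hμ0meas : ∀ g : ℝ≥0 →ᵇ ℝ, AEMeasurable (fun z => ∫ x, g x ∂(μ0 z)) volume)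
    (t : ℝ) (ht : 0 ≤ t)
    (yCy : ℝ → ℝ)
    (hyCy : ∀ y : ℝ, yCy y = 1 - ∫ z in y..1, ∫ x, rexp (-(x : ℝ) * t) ∂(μ0 z))
    (yhat : ℝ → ℝ)
    (hyhat : ∀ y ∈ Ico (yCy 0) 1, yhat y ∈ Ico (0 : ℝ) 1 ∧ yCy (yhat y) = y)
    (hyhat' : ∀ x ∈ Ico (0 : ℝ) 1, yhat (yCy x) = x)
    (g : ℝ≥0 →ᵇ ℝ) (y : ℝ) (hy : y ∈ Ico (yCy 0) 1) :
    ∫ u in (yhat y)..1, ∫ x, g x * rexp (-(x : ℝ) * t) ∂(μ0 u)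
      = ∫ z in y..1,
          (∫ x, g x * rexp (-(x : ℝ) * t) ∂(μ0 (yhat z)))
            / (∫ x, rexp (-(x : ℝ) * t) ∂(μ0 (yhat z))) := by
  obtain ⟨hy0, hy1⟩ := hy
  obtain ⟨⟨ha0, ha1⟩, hea⟩ := hyhat y ⟨hy0, hy1⟩
  set a := yhat y with hadef
  set f : ℝ → ℝ := fun z => ∫ x, rexp (-(x : ℝ) * t) ∂(μ0 z) with hfdef
  set G : ℝ → ℝ := fun z => ∫ x, g x * rexp (-(x : ℝ) * t) ∂(μ0 z) with hGdef
  -- the exponential as a bounded continuous function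
  have hexp_le : ∀ x : ℝ≥0, rexp (-(x : ℝ) * t) ≤ 1 := fun x =>
    Real.exp_le_one_iff.2 (by nlinarith [x.coe_nonneg, mul_nonneg x.coe_nonneg ht])
  have hEcont : Continuous fun x : ℝ≥0 => rexp (-(x : ℝ) * t) := by continuity
  have hEbd : ∀ x : ℝ≥0, ‖rexp (-(x : ℝ) * t)‖ ≤ 1 := by
    intro x
    rw [Real.norm_eq_abs, abs_of_pos (Real.exp_pos _)]
    exact hexp_le x
  set E : ℝ≥0 →ᵇ ℝ := BoundedContinuousFunction.ofNormedAddCommGroup _ hEcont 1 hEbd with hEdef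
  have hEapp : ∀ x : ℝ≥0, E x = rexp (-(x : ℝ) * t) := fun x => rfl
  have hfmeas : AEMeasurable f volume := hμ0meas E
  have hGmeas : AEMeasurable G volume := by
    have h := hμ0meas (g * E)
    have h2 : (fun z => ∫ x, (g * E) x ∂(μ0 z)) = G := by
      funext z
      congr 1
    rwa [h2] at h
  have hEint : ∀ z, Integrable (fun x : ℝ≥0 => rexp (-(x : ℝ) * t)) (μ0 z) :=
    fun z => E.integrable (μ0 z)
  have hfpos : ∀ z, 0 < f z := by
    intro z
    refine (integral_pos_iff_support_of_nonneg (fun x => (Real.exp_pos _).le) (hEint z)).2 ?_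
    have hsupp : Function.support (fun x : ℝ≥0 => rexp (-(x : ℝ) * t)) = univ := by
      ext x; simp [Function.support, Real.exp_ne_zero]
    rw [hsupp]
    simp
  have hfle : ∀ z, f z ≤ 1 := by
    intro z
    have h1 : f z ≤ ∫ _ : ℝ≥0, (1 : ℝ) ∂(μ0 z) :=
      integral_mono (hEint z) (integrable_const 1) (fun x => hexp_le x)
    simpa using h1
  have hfabs : ∀ z, |f z| ≤ 1 := fun z => abs_le.2 ⟨by linarith [hfpos z], hfle z⟩
  have hGabs : ∀ z, |G z| ≤ ‖g‖ := by
    intro z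
    calc |G z| = ‖∫ x, g x * rexp (-(x : ℝ) * t) ∂(μ0 z)‖ := rfl
      _ ≤ ∫ x, ‖g x * rexp (-(x : ℝ) * t)‖ ∂(μ0 z) := norm_integral_le_integral_norm _
      _ ≤ ∫ _ : ℝ≥0, ‖g‖ ∂(μ0 z) := by
          refine integral_mono_of_nonneg (ae_of_all _ fun x => norm_nonneg _)
            (integrable_const _) (ae_of_all _ fun x => ?_)
          show ‖g x * rexp (-(x : ℝ) * t)‖ ≤ ‖g‖
          rw [norm_mul]
          calc ‖g x‖ * ‖rexp (-(x : ℝ) * t)‖ ≤ ‖g‖ * 1 :=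
                mul_le_mul (g.norm_coe_le_norm x) (hEbd x) (norm_nonneg _) (norm_nonneg _)
            _ = ‖g‖ := mul_one _
      _ = ‖g‖ := by simp
  -- interval integrability of bounded a.e.-measurable functions
  have hbint : ∀ (F : ℝ → ℝ) (C : ℝ), AEMeasurable F volume → (∀ z, |F z| ≤ C) →
      ∀ c d : ℝ, IntervalIntegrable F volume c d := by
    intro F C hm hb c d
    refine (intervalIntegrable_const (c := C)).mono_fun' hm.aestronglyMeasurable.restrict ?_
    exact ae_of_all _ fun z => by simpa using hb z
  have hfint := hbint f 1 hfmeas hfabs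
  have hGint := hbint G ‖g‖ hGmeas hGabs
  -- difference formula
  have hdiff : ∀ c d : ℝ, yCy d - yCy c = ∫ z in c..d, f z := by
    intro c d
    have h := intervalIntegral.integral_add_adjacent_intervals (hfint c d) (hfint d 1)
    rw [hyCy c, hyCy d]
    linarith
  -- strict monotonicity
  have hposint : ∀ c d : ℝ, c < d → 0 < ∫ z in c..d, f z := by
    intro c d hcd
    rw [intervalIntegral.integral_of_le hcd.le]
    refine (setIntegral_pos_iff_support_of_nonneg_ae
      (ae_of_all _ fun z => (hfpos z).le) ((hfint c d).1)).2 ?_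
    have hsupp : Function.support f ∩ Ioc c d = Ioc c d :=
      inter_eq_right.2 fun z _ => (hfpos z).ne'
    rw [hsupp, Real.volume_Ioc]
    simp [hcd]
  have hmono : StrictMono yCy := by
    intro c d hcd
    have h1 := hposint c d hcd
    have h2 := hdiff c d
    linarith
  have hcont : Continuous yCy := by
    have hlip : LipschitzWith 1 yCy := by
      refine LipschitzWith.of_dist_le_mul fun c d => ?_
      rw [Real.dist_eq, Real.dist_eq]
      have h1 : yCy c - yCy d = ∫ z in d..c, f z := hdiff d c
      have h2 : ‖∫ z in d..c, f z‖ ≤ 1 * |c - d| :=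
        intervalIntegral.norm_integral_le_of_norm_le_const fun z _ => by
          simpa using hfabs z
      rw [h1]
      simpa using h2
    exact hlip.continuous
  have hemb : MeasurableEmbedding yCy := hcont.measurableEmbedding hmono.injective
  have hyCy1 : yCy 1 = 1 := by rw [hyCy]; simp
  -- the Stieltjes function associated to yCy
  set F : StieltjesFunction ℝ := ⟨yCy, hmono.monotone, fun x => hcont.continuousAt.continuousWithinAt⟩
    with hFdef
  have hmIoc : ∀ c d : ℝ, F.measure (Ioc c d) = ENNReal.ofReal (yCy d - yCy c) := fun c d =>
    F.measure_Ioc c d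
  have hcomap : Measure.comap yCy volume = F.measure := by
    refine (Measure.ext_of_Ioc F.measure _ fun c d hcd => ?_).symm
    rw [hmIoc, hemb.comap_apply]
    have himg : yCy '' Ioc c d = Ioc (yCy c) (yCy d) := by
      refine Subset.antisymm ?_ (intermediate_value_Ioc hcd.le hcont.continuousOn)
      rintro _ ⟨u, hu, rfl⟩
      exact ⟨hmono hu.1, hmono.monotone hu.2⟩
    rw [himg, Real.volume_Ioc]
  set fnn : ℝ → ℝ≥0 := fun u => (f u).toNNReal with hfnndef
  have hfnnmeas : AEMeasurable fnn volume := hfmeas.real_toNNReal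
  set ρ : Measure ℝ := volume.withDensity (fun u => (fnn u : ENNReal)) with hρdef
  have hρF : F.measure = ρ := by
    refine Measure.ext_of_Ioc _ _ fun c d hcd => ?_
    rw [hmIoc, hρdef, withDensity_apply _ measurableSet_Ioc]
    have h1 : yCy d - yCy c = ∫ z in Ioc c d, f z := by
      rw [hdiff c d, intervalIntegral.integral_of_le hcd.le]
    rw [h1, ofReal_integral_eq_lintegral_ofReal ((hfint c d).1)
      (ae_of_all _ fun z => (hfpos z).le)]
    rfl
  -- preimage and range facts
  have hpre : yCy ⁻¹' (Ioc y 1) = Ioc a 1 := by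
    ext u
    simp only [mem_preimage, mem_Ioc]
    constructor
    · rintro ⟨h1, h2⟩
      refine ⟨?_, ?_⟩
      · rw [← hea] at h1; exact hmono.lt_iff_lt.1 h1
      · rw [← hyCy1] at h2; exact hmono.le_iff_le.1 h2
    · rintro ⟨h1, h2⟩
      constructor
      · rw [← hea]; exact hmono h1
      · rw [← hyCy1]; exact hmono.monotone h2
  have hsub : Ioc y 1 ⊆ range yCy := by
    have h := intermediate_value_Ioc ha1.le hcont.continuousOn
    rw [hea, hyCy1] at h
    exact h.trans (image_subset_range _ _)
  have hmeq : (volume.restrict (range yCy)).restrict (Ioc y 1) = volume.restrict (Ioc y 1) := by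
    rw [Measure.restrict_restrict measurableSet_Ioc, inter_eq_left.2 hsub]
  -- the main computation
  have key : ∫ z in Ioc y 1, G (yhat z) / f (yhat z)
      = ∫ u in Ioc a 1, G u := by
    calc ∫ z in Ioc y 1, G (yhat z) / f (yhat z)
        = ∫ z in Ioc y 1, G (yhat z) / f (yhat z) ∂(volume.restrict (range yCy)) := by
          rw [← hmeq]
      _ = ∫ z in Ioc y 1, G (yhat z) / f (yhat z)
            ∂(Measure.map yCy (Measure.comap yCy volume)) := by rw [hemb.map_comap]
      _ = ∫ u in yCy ⁻¹' (Ioc y 1), G (yhat (yCy u)) / f (yhat (yCy u))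
            ∂(Measure.comap yCy volume) := hemb.setIntegral_map _ _
      _ = ∫ u in Ioc a 1, G (yhat (yCy u)) / f (yhat (yCy u)) ∂ρ := by
          rw [hpre, hcomap, hρF]
      _ = ∫ u in Ioc a 1, fnn u • (G (yhat (yCy u)) / f (yhat (yCy u))) := by
          rw [hρdef]
          exact setIntegral_withDensity_eq_setIntegral_smul₀ hfnnmeas.restrict _ measurableSet_Ioc
      _ = ∫ u in Ioc a 1, G u := by
          refine setIntegral_congr_ae measurableSet_Ioc ?_
          have h1 : ∀ᵐ u : ℝ, u ≠ (1 : ℝ) := by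
            have hs : {u : ℝ | ¬ u ≠ 1} = {1} := by ext u; simp
            rw [ae_iff, hs]
            exact measure_singleton 1
          filter_upwards [h1] with u hu1 hu
          have huI : u ∈ Ico (0 : ℝ) 1 :=
            ⟨le_of_lt (lt_of_le_of_lt ha0 hu.1), lt_of_le_of_ne hu.2 hu1⟩
          rw [hyhat' u huI, NNReal.smul_def]
          have hco : ((fnn u : ℝ)) = f u := Real.coe_toNNReal _ (hfpos u).le
          rw [hco]
          have hne : f u ≠ 0 := (hfpos u).ne'
          rw [smul_eq_mul]
          field_simp
  show ∫ u in a..1, G u = ∫ z in y..1, G (yhat z) / f (yhat z)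
  rw [intervalIntegral.integral_of_le ha1.le, intervalIntegral.integral_of_le hy1.le, key]
end
end

section
/- Let λ be a Borel probability measure on [0,∞) with λ({0}) = 0 and ∫_{[0,∞)} w λ(dw) < ∞, let y_C(t) = 1 − ∫_{[0,∞)} e^{−wt} λ(dw), and let t_0 : [0,1) → [0,∞) be the inverse function of y_C. Then for every y ∈ [0,1) and every bounded continuous g : [0,∞) → ℝ, ∫_0^y ( ∫_{[0,∞)} g(w) w e^{−w t_0(z)} λ(dw) / ∫_{[0,∞)} w e^{−w t_0(z)} λ(dw) ) dz = ∫_{[0,∞)} g(w) (1 − e^{−w t_0(y)}) λ(dw). -/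
open MeasureTheory Filter Topology Real Set NNReal BoundedContinuousFunction

noncomputable section

lemma aux_contw : Continuous (fun p : ℝ × ℝ≥0 => (p.2 : ℝ) * rexp (-(p.2 : ℝ) * p.1)) := by
  fun_prop

lemma aux_exp_le_one {x : ℝ≥0} {t : ℝ} (ht : 0 ≤ t) : rexp (-(x:ℝ) * t) ≤ 1 := by
  apply Real.exp_le_one_iff.mpr
  nlinarith [x.coe_nonneg]

lemma aux_norm_w {x : ℝ≥0} {t : ℝ} (ht : 0 ≤ t) :
    ‖(x : ℝ) * rexp (-(x : ℝ) * t)‖ ≤ (x : ℝ) := by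
  rw [norm_mul, Real.norm_eq_abs, Real.norm_eq_abs, abs_of_nonneg x.coe_nonneg,
    abs_of_pos (Real.exp_pos _)]
  nlinarith [Real.exp_pos (-(x:ℝ) * t), aux_exp_le_one (x := x) ht, x.coe_nonneg]

lemma aux_intD (lam : Measure ℝ≥0) (hmean : Integrable (fun x : ℝ≥0 => (x : ℝ)) lam)
    {t : ℝ} (ht : 0 ≤ t) :
    Integrable (fun x : ℝ≥0 => (x : ℝ) * rexp (-(x : ℝ) * t)) lam := by
  refine hmean.mono' ?_ ?_
  · exact (aux_contw.comp (Continuous.prodMk_right t)).aestronglyMeasurable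
  · filter_upwards with x using aux_norm_w ht

lemma aux_intN (lam : Measure ℝ≥0) (hmean : Integrable (fun x : ℝ≥0 => (x : ℝ)) lam)
    (g : ℝ≥0 →ᵇ ℝ) {t : ℝ} (ht : 0 ≤ t) :
    Integrable (fun x : ℝ≥0 => g x * ((x : ℝ) * rexp (-(x : ℝ) * t))) lam := by
  refine (hmean.const_mul ‖g‖).mono' ?_ ?_
  · exact ((g.continuous.comp continuous_id).mul
      (aux_contw.comp (Continuous.prodMk_right t))).aestronglyMeasurable
  · filter_upwards with x
    rw [norm_mul]
    calc ‖g x‖ * ‖(x : ℝ) * rexp (-(x : ℝ) * t)‖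
        ≤ ‖g‖ * (x : ℝ) := by
          apply mul_le_mul (g.norm_coe_le_norm x) (aux_norm_w ht) (norm_nonneg _)
            (norm_nonneg g)

lemma aux_intE (lam : Measure ℝ≥0) [IsFiniteMeasure lam] {t : ℝ} (ht : 0 ≤ t) :
    Integrable (fun x : ℝ≥0 => rexp (-(x : ℝ) * t)) lam := by
  refine (integrable_const (1:ℝ)).mono' ?_ ?_
  · have : Continuous fun x : ℝ≥0 => rexp (-(x:ℝ) * t) := by fun_prop
    exact this.aestronglyMeasurable
  · filter_upwards with x
    rw [Real.norm_eq_abs, abs_of_pos (Real.exp_pos _)]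
    exact aux_exp_le_one ht

lemma aux_Dpos (lam : Measure ℝ≥0) [IsProbabilityMeasure lam] (h0 : lam {0} = 0)
    (hmean : Integrable (fun x : ℝ≥0 => (x : ℝ)) lam) {t : ℝ} (ht : 0 ≤ t) :
    0 < ∫ x, (x : ℝ) * rexp (-(x : ℝ) * t) ∂lam := by
  rw [integral_pos_iff_support_of_nonneg_ae
    (Eventually.of_forall fun x => by positivity) (aux_intD lam hmean ht)]
  have hsub : ({0}ᶜ : Set ℝ≥0) ⊆ Function.support fun x : ℝ≥0 => (x:ℝ) * rexp (-(x:ℝ)*t) := by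
    intro x hx
    have hx0 : x ≠ 0 := hx
    have hxpos : (0:ℝ) < x := by
      have : 0 < x := hx0.bot_lt
      exact_mod_cast this
    have : (0:ℝ) < (x:ℝ) * rexp (-(x:ℝ)*t) := by positivity
    exact ne_of_gt this
  calc (0 : ENNReal) < 1 := by norm_num
    _ = lam ({0}ᶜ) := by
        rw [measure_compl (measurableSet_singleton 0) (measure_ne_top lam _), h0, measure_univ]
        simp
    _ ≤ _ := measure_mono hsub

lemma aux_contD (lam : Measure ℝ≥0) (hmean : Integrable (fun x : ℝ≥0 => (x : ℝ)) lam) :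
    ContinuousOn (fun t => ∫ x, (x : ℝ) * rexp (-(x : ℝ) * t) ∂lam) (Ici 0) := by
  apply continuousOn_of_dominated (bound := fun x : ℝ≥0 => (x : ℝ))
  · exact fun t _ => (aux_contw.comp (Continuous.prodMk_right t)).aestronglyMeasurable
  · exact fun t ht => Eventually.of_forall fun x => aux_norm_w ht
  · exact hmean
  · refine Eventually.of_forall fun x => Continuous.continuousOn ?_
    fun_prop

lemma aux_contN (lam : Measure ℝ≥0) (hmean : Integrable (fun x : ℝ≥0 => (x : ℝ)) lam)
    (g : ℝ≥0 →ᵇ ℝ) :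
    ContinuousOn (fun t => ∫ x, g x * ((x : ℝ) * rexp (-(x : ℝ) * t)) ∂lam) (Ici 0) := by
  apply continuousOn_of_dominated (bound := fun x : ℝ≥0 => ‖g‖ * (x : ℝ))
  · exact fun t _ => ((g.continuous.comp continuous_id).mul
      (aux_contw.comp (Continuous.prodMk_right t))).aestronglyMeasurable
  · intro t ht
    refine Eventually.of_forall fun x => ?_
    rw [norm_mul]
    exact mul_le_mul (g.norm_coe_le_norm x) (aux_norm_w ht) (norm_nonneg _) (norm_nonneg g)
  · exact hmean.const_mul _
  · refine Eventually.of_forall fun x => Continuous.continuousOn ?_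
    fun_prop

lemma aux_contE (lam : Measure ℝ≥0) [IsProbabilityMeasure lam] :
    ContinuousOn (fun t => ∫ x, rexp (-(x : ℝ) * t) ∂lam) (Ici 0) := by
  apply continuousOn_of_dominated (bound := fun _ : ℝ≥0 => (1 : ℝ))
  · intro t _
    have : Continuous fun x : ℝ≥0 => rexp (-(x:ℝ) * t) := by fun_prop
    exact this.aestronglyMeasurable
  · intro t ht
    refine Eventually.of_forall fun x => ?_
    rw [Real.norm_eq_abs, abs_of_pos (Real.exp_pos _)]
    exact aux_exp_le_one ht
  · exact integrable_const 1
  · refine Eventually.of_forall fun x => Continuous.continuousOn ?_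
    fun_prop

lemma aux_deriv_exp (x : ℝ≥0) (s : ℝ) :
    HasDerivAt (fun u : ℝ => rexp (-(x : ℝ) * u)) (-(x:ℝ) * rexp (-(x : ℝ) * s)) s := by
  have h1 : HasDerivAt (fun u : ℝ => -(x:ℝ) * u) (-(x:ℝ)) s := by
    simpa using (hasDerivAt_id s).const_mul (-(x:ℝ))
  simpa [mul_comm] using h1.exp

lemma aux_derivF (lam : Measure ℝ≥0) [IsProbabilityMeasure lam]
    (hmean : Integrable (fun x : ℝ≥0 => (x : ℝ)) lam) {t : ℝ} (ht : 0 < t) :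
    HasDerivAt (fun u => ∫ x, rexp (-(x : ℝ) * u) ∂lam)
      (∫ x, -(x : ℝ) * rexp (-(x : ℝ) * t) ∂lam) t := by
  have key := hasDerivAt_integral_of_dominated_loc_of_deriv_le (μ := lam)
    (F := fun u (x : ℝ≥0) => rexp (-(x : ℝ) * u))
    (F' := fun u (x : ℝ≥0) => -(x : ℝ) * rexp (-(x : ℝ) * u)) (x₀ := t)
    (bound := fun x : ℝ≥0 => (x : ℝ)) (s := Metric.ball t (t/2)) (Metric.ball_mem_nhds t (by linarith))
    ?_ (aux_intE lam ht.le) ?_ ?_ hmean ?_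
  · exact key.2
  · refine Eventually.of_forall fun u => ?_
    have : Continuous fun x : ℝ≥0 => rexp (-(x:ℝ) * u) := by fun_prop
    exact this.aestronglyMeasurable
  · have : Continuous fun x : ℝ≥0 => -(x:ℝ) * rexp (-(x:ℝ) * t) := by fun_prop
    exact this.aestronglyMeasurable
  · refine Eventually.of_forall fun x => fun u hu => ?_
    have hu0 : 0 ≤ u := by
      rw [Metric.mem_ball, Real.dist_eq] at hu
      cases abs_lt.mp hu with
      | intro h1 h2 => linarith
    show ‖-(x:ℝ) * rexp (-(x:ℝ) * u)‖ ≤ (x : ℝ)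
    rw [neg_mul, norm_neg]
    exact aux_norm_w hu0
  · exact Eventually.of_forall fun x => fun u _ => aux_deriv_exp x u

/-- for the inverse `t_0` of `y_C`,
`∫_0^y (∫ g(w) w e^{-w t_0(z)} λ(dw)) / (∫ w e^{-w t_0(z)} λ(dw)) dz
  = ∫ g(w)(1 - e^{-w t_0(y)}) λ(dw)` for all `y ∈ [0,1)`. -/
theorem stmt15
    (lam : Measure ℝ≥0) [IsProbabilityMeasure lam] (h0 : lam {0} = 0)
    (hmean : Integrable (fun x : ℝ≥0 => (x : ℝ)) lam)
    (yC : ℝ → ℝ) (hyC : ∀ t : ℝ, yC t = 1 - ∫ x, rexp (-(x : ℝ) * t) ∂lam)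
    (t0 : ℝ → ℝ)
    (ht0 : ∀ y ∈ Ico (0 : ℝ) 1, 0 ≤ t0 y ∧ yC (t0 y) = y)
    (ht0' : ∀ t : ℝ, 0 ≤ t → t0 (yC t) = t)
    (y : ℝ) (hy : y ∈ Ico (0 : ℝ) 1) (g : ℝ≥0 →ᵇ ℝ) :
    ∫ z in (0 : ℝ)..y,
        (∫ x, g x * ((x : ℝ) * rexp (-(x : ℝ) * t0 z)) ∂lam)
          / (∫ x, (x : ℝ) * rexp (-(x : ℝ) * t0 z) ∂lam)
      = ∫ x, g x * (1 - rexp (-(x : ℝ) * t0 y)) ∂lam := by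
  obtain ⟨hy0, hy1⟩ := hy
  obtain ⟨hT0, hTy⟩ := ht0 y ⟨hy0, hy1⟩
  set T := t0 y with hT
  set D : ℝ → ℝ := fun t => ∫ x, (x:ℝ) * rexp (-(x:ℝ)*t) ∂lam with hD
  set N : ℝ → ℝ := fun t => ∫ x, g x * ((x:ℝ) * rexp (-(x:ℝ)*t)) ∂lam with hN
  show (∫ z in (0:ℝ)..y, N (t0 z) / D (t0 z)) = ∫ x, g x * (1 - rexp (-(x:ℝ) * T)) ∂lam
  have hyCfun : yC = fun t => 1 - ∫ x, rexp (-(x : ℝ) * t) ∂lam := funext hyC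
  have contyC : ContinuousOn yC (Ici 0) := by
    rw [hyCfun]; exact continuousOn_const.sub (aux_contE lam)
  have Dpos : ∀ t:ℝ, 0 ≤ t → 0 < D t := fun t ht => aux_Dpos lam h0 hmean ht
  have hderiv : ∀ t : ℝ, 0 < t → HasDerivAt yC (D t) t := by
    intro t ht
    rw [hyCfun]
    have h2 := (hasDerivAt_const t (1:ℝ)).sub (aux_derivF lam hmean ht)
    refine HasDerivAt.congr_deriv h2 ?_
    rw [zero_sub, ← integral_neg, hD]
    simp only [neg_mul, neg_neg]
  have hmono : StrictMonoOn yC (Ici 0) := by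
    apply strictMonoOn_of_deriv_pos (convex_Ici 0) contyC
    intro t ht
    rw [interior_Ici] at ht
    rw [(hderiv t ht).deriv]
    exact Dpos t ht.le
  have yC0 : yC 0 = 0 := by
    rw [hyC 0]
    simp
  have hyCmono := hmono.monotoneOn
  have hIco : ∀ z ∈ Icc (0:ℝ) y, z ∈ Ico (0:ℝ) 1 := fun z hz => ⟨hz.1, lt_of_le_of_lt hz.2 hy1⟩
  have ht0id : ∀ z ∈ Icc (0:ℝ) y, yC (t0 z) = z := fun z hz => (ht0 z (hIco z hz)).2
  have ht0nn : ∀ z ∈ Icc (0:ℝ) y, 0 ≤ t0 z := fun z hz => (ht0 z (hIco z hz)).1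
  have ht0mem : ∀ z ∈ Icc (0:ℝ) y, t0 z ∈ Icc 0 T := by
    intro z hz
    refine ⟨ht0nn z hz, ?_⟩
    by_contra hlt
    push_neg at hlt
    have := hmono hT0 (ht0nn z hz) hlt
    rw [hTy, ht0id z hz] at this
    linarith [hz.2]
  have t0mono : MonotoneOn t0 (Icc 0 y) := by
    intro z1 h1 z2 h2 h12
    by_contra hlt
    push_neg at hlt
    have := hmono (ht0nn z2 h2) (ht0nn z1 h1) hlt
    rw [ht0id z1 h1, ht0id z2 h2] at this
    linarith
  have t0img : t0 '' Icc 0 y = Icc 0 T := by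
    apply Subset.antisymm
    · rintro _ ⟨z, hz, rfl⟩; exact ht0mem z hz
    · rintro t ⟨h1, h2⟩
      have hmem : yC t ∈ Icc (0:ℝ) y := by
        constructor
        · rw [← yC0]; exact hyCmono self_mem_Ici h1 h1
        · rw [← hTy]; exact hyCmono h1 hT0 h2
      exact ⟨yC t, hmem, ht0' t h1⟩
  have t0pos : ∀ z ∈ Ioo (0:ℝ) y, 0 < t0 z := by
    intro z hz
    have hzIcc : z ∈ Icc (0:ℝ) y := ⟨hz.1.le, hz.2.le⟩
    rcases lt_or_eq_of_le (ht0nn z hzIcc) with h | h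
    · exact h
    · exfalso
      have h2 := ht0id z hzIcc
      rw [← h, yC0] at h2
      linarith [hz.1]
  have t0ltT : ∀ z ∈ Ioo (0:ℝ) y, t0 z < T := by
    intro z hz
    have hzIcc : z ∈ Icc (0:ℝ) y := ⟨hz.1.le, hz.2.le⟩
    rcases lt_or_eq_of_le (ht0mem z hzIcc).2 with h | h
    · exact h
    · exfalso
      have h2 := ht0id z hzIcc
      rw [h, hTy] at h2
      linarith [hz.2]
  have t0contAt : ∀ z ∈ Ioo (0:ℝ) y, ContinuousAt t0 z := by
    intro z hz
    apply continuousAt_of_monotoneOn_of_image_mem_nhds t0mono (Icc_mem_nhds hz.1 hz.2)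
    rw [t0img]
    exact Icc_mem_nhds (t0pos z hz) (t0ltT z hz)
  -- bound on the integrand
  have hNle : ∀ t:ℝ, 0 ≤ t → |N t| ≤ ‖g‖ * D t := by
    intro t ht
    have h1 : |N t| ≤ ∫ x, ‖g x * ((x:ℝ) * rexp (-(x:ℝ)*t))‖ ∂lam := by
      rw [hN, ← Real.norm_eq_abs]
      exact norm_integral_le_integral_norm _
    refine h1.trans ?_
    rw [hD, ← integral_const_mul]
    apply integral_mono ((aux_intN lam hmean g ht).norm) ((aux_intD lam hmean ht).const_mul _)
    intro x
    show ‖g x * ((x:ℝ) * rexp (-(x:ℝ)*t))‖ ≤ ‖g‖ * ((x:ℝ) * rexp (-(x:ℝ)*t))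
    rw [norm_mul, Real.norm_of_nonneg (by positivity : (0:ℝ) ≤ (x:ℝ) * rexp (-(x:ℝ)*t))]
    exact mul_le_mul_of_nonneg_right (g.norm_coe_le_norm x) (by positivity)
  have habs : ∀ z ∈ Icc (0:ℝ) y, |N (t0 z) / D (t0 z)| ≤ ‖g‖ := by
    intro z hz
    have ht := ht0nn z hz
    rw [abs_div, abs_of_pos (Dpos _ ht), div_le_iff₀ (Dpos _ ht)]
    exact hNle _ ht
  -- continuity of the integrand on (0, y)
  have hcont : ContinuousOn (fun z => N (t0 z) / D (t0 z)) (Ioo 0 y) := by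
    intro z hz
    have hzIcc : z ∈ Icc (0:ℝ) y := ⟨hz.1.le, hz.2.le⟩
    have hct0 := t0contAt z hz
    have hIci : Ici (0:ℝ) ∈ 𝓝 (t0 z) := Ici_mem_nhds (t0pos z hz)
    have hcN : ContinuousAt N (t0 z) := by
      rw [hN]
      exact ((aux_contN lam hmean g) (t0 z) (ht0nn z hzIcc)).continuousAt hIci
    have hcD : ContinuousAt D (t0 z) := by
      rw [hD]
      exact ((aux_contD lam hmean) (t0 z) (ht0nn z hzIcc)).continuousAt hIci
    exact ((hcN.comp hct0).div (hcD.comp hct0)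
      (ne_of_gt (Dpos _ (ht0nn z hzIcc)))).continuousWithinAt
  have hint1 : IntegrableOn (fun z => N (t0 z) / D (t0 z)) (Icc 0 y) volume := by
    rw [integrableOn_Icc_iff_integrableOn_Ioo]
    refine ⟨hcont.aestronglyMeasurable measurableSet_Ioo,
      HasFiniteIntegral.restrict_of_bounded (C := ‖g‖) measure_Ioo_lt_top ?_⟩
    rw [ae_restrict_iff' measurableSet_Ioo]
    exact Eventually.of_forall fun z hz => by
      rw [Real.norm_eq_abs]; exact habs z ⟨hz.1.le, hz.2.le⟩
  -- images under yC
  have himg1 : yC '' Ioo 0 T ⊆ Ioo 0 y := by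
    rintro _ ⟨t, ht, rfl⟩
    constructor
    · rw [← yC0]; exact hmono self_mem_Ici ht.1.le ht.1
    · rw [← hTy]; exact hmono ht.1.le hT0 ht.2
  have himg2 : yC '' Icc 0 T ⊆ Icc 0 y := by
    rintro _ ⟨t, ht, rfl⟩
    exact ⟨by rw [← yC0]; exact hyCmono self_mem_Ici ht.1 ht.1,
      by rw [← hTy]; exact hyCmono ht.1 hT0 ht.2⟩
  -- equality of the transported integrand with N on [0, T]
  have heq : ∀ t ∈ Icc (0:ℝ) T,
      D t • ((fun z => N (t0 z) / D (t0 z)) ∘ yC) t = N t := by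
    intro t ht
    have h1 : t0 (yC t) = t := ht0' t ht.1
    simp only [Function.comp_apply, h1, smul_eq_mul]
    rw [mul_div_cancel₀ _ (ne_of_gt (Dpos t ht.1))]
  -- change of variables
  have hsub := intervalIntegral.integral_comp_smul_deriv''' (f := yC)
    (f' := D) (g := fun z => N (t0 z) / D (t0 z)) (a := 0) (b := T)
    ?_ ?_ ?_ ?_ ?_
  · rw [yC0, hTy] at hsub
    rw [← hsub]
    have hcongr : (∫ t in (0:ℝ)..T, D t • ((fun z => N (t0 z) / D (t0 z)) ∘ yC) t)
        = ∫ t in (0:ℝ)..T, N t := by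
      apply intervalIntegral.integral_congr
      intro t ht
      rw [uIcc_of_le hT0] at ht
      exact heq t ht
    rw [hcongr, intervalIntegral.integral_of_le hT0, hN]
    -- Fubini
    have hcontprod : Continuous
        (Function.uncurry fun (t:ℝ) (x:ℝ≥0) => g x * ((x:ℝ) * rexp (-(x:ℝ)*t))) := by
      have : Continuous fun p : ℝ × ℝ≥0 => g p.2 * ((p.2:ℝ) * rexp (-(p.2:ℝ)*p.1)) :=
        (g.continuous.comp continuous_snd).mul aux_contw
      exact this
    have hmeasprod := hcontprod.aestronglyMeasurable
      (μ := (volume.restrict (Ioc 0 T)).prod lam)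
    have hprodint : Integrable
        (Function.uncurry fun (t:ℝ) (x:ℝ≥0) => g x * ((x:ℝ) * rexp (-(x:ℝ)*t)))
        ((volume.restrict (Ioc 0 T)).prod lam) := by
      rw [integrable_prod_iff hmeasprod]
      constructor
      · rw [ae_restrict_iff' measurableSet_Ioc]
        exact Eventually.of_forall fun t ht => aux_intN lam hmean g ht.1.le
      · apply Integrable.mono' (integrable_const (‖g‖ * ∫ x, (x:ℝ) ∂lam))
        · exact hmeasprod.norm.integral_prod_right'
        · rw [ae_restrict_iff' measurableSet_Ioc]
          refine Eventually.of_forall fun t ht => ?_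
          have ht0le : (0:ℝ) ≤ t := ht.1.le
          rw [Real.norm_of_nonneg (integral_nonneg fun x => norm_nonneg _)]
          calc (∫ x, ‖g x * ((x:ℝ) * rexp (-(x:ℝ)*t))‖ ∂lam)
              ≤ ∫ x, ‖g‖ * (x:ℝ) ∂lam := by
                apply integral_mono ((aux_intN lam hmean g ht0le).norm)
                  (hmean.const_mul _)
                intro x
                show ‖g x * ((x:ℝ) * rexp (-(x:ℝ)*t))‖ ≤ ‖g‖ * (x:ℝ)
                rw [norm_mul]
                exact mul_le_mul (g.norm_coe_le_norm x) (aux_norm_w ht0le)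
                  (norm_nonneg _) (norm_nonneg g)
            _ = ‖g‖ * ∫ x, (x:ℝ) ∂lam := integral_const_mul _ _
    have hswap := integral_integral_swap
      (f := fun (t:ℝ) (x:ℝ≥0) => g x * ((x:ℝ)*rexp (-(x:ℝ)*t))) hprodint
    rw [hswap]
    refine integral_congr_ae (Eventually.of_forall fun x => ?_)
    show (∫ t in Ioc (0:ℝ) T, g x * ((x:ℝ) * rexp (-(x:ℝ)*t))) = g x * (1 - rexp (-(x:ℝ)*T))
    rw [← intervalIntegral.integral_of_le hT0, intervalIntegral.integral_const_mul]
    congr 1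
    have hanti : ∀ s : ℝ, HasDerivAt (fun u => -rexp (-(x:ℝ)*u))
        ((x:ℝ) * rexp (-(x:ℝ)*s)) s := fun s => by
      simpa [neg_mul, neg_neg] using (aux_deriv_exp x s).fun_neg
    rw [intervalIntegral.integral_eq_sub_of_hasDerivAt (fun s _ => hanti s)
      ((Continuous.intervalIntegrable (by fun_prop) 0 T))]
    simp [mul_zero, Real.exp_zero]
    ring
  · rw [uIcc_of_le hT0]
    exact contyC.mono Icc_subset_Ici_self
  · rw [min_eq_left hT0, max_eq_right hT0]
    exact fun t ht => (hderiv t ht.1).hasDerivWithinAt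
  · rw [min_eq_left hT0, max_eq_right hT0]
    exact hcont.mono himg1
  · rw [uIcc_of_le hT0]
    exact hint1.mono_set himg2
  · rw [uIcc_of_le hT0]
    apply IntegrableOn.congr_fun ?_ (fun t ht => (heq t ht).symm) measurableSet_Icc
    have : ContinuousOn N (Icc 0 T) := by
      rw [hN]; exact (aux_contN lam hmean g).mono Icc_subset_Ici_self
    exact this.integrableOn_Icc
end
end
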